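/- arXiv:2001.03433 — 5 statements merged into one kernel-verified Lean document; each statement's English description precedes it below -/
import Mathlib

section
/- Let s and k be positive integers with k > 2^{s-1}, and let G be an s-by-n matrix over F_2 that is a k-PIR generator matrix such that every nonzero vector of F_2^s occurs at least once as a column of G. Then n ≥ P(s, k − 2^{s-1}) + 2^s − 1. -/
/-- An `s × n` matrix `G` over `𝔽₂` is a `k`-PIR generator matrix if for every
index `i` there exist `k` pairwise disjoint recovery sets of column indices,
each of whose column sums equals the `i`-th standard unit vector. -/
def IsPIRMatrix (s n k : ℕ) (G : Matrix (Fin s) (Fin n) (ZMod 2)) : Prop :=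
  ∀ i : Fin s, ∃ R : Fin k → Finset (Fin n),
    (∀ j j' : Fin k, j ≠ j' → Disjoint (R j) (R j')) ∧
    ∀ j : Fin k, (∑ h ∈ R j, fun r : Fin s => G r h) = Pi.single i 1

/-- `PIRlen s k` is the smallest positive `n` for which an `s × n` `k`-PIR
generator matrix over `𝔽₂` exists. -/
noncomputable def PIRlen (s k : ℕ) : ℕ :=
  sInf {n : ℕ | 0 < n ∧ ∃ G : Matrix (Fin s) (Fin n) (ZMod 2), IsPIRMatrix s n k G}

theorem test : True := trivial

namespace PIRCore

variable {s : ℕ}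

def rho (e : Fin s → ZMod 2) (i₀ : Fin s) (u : Fin s → ZMod 2) : Fin s → ZMod 2 :=
  if u i₀ = 1 then u else u + e

lemma add_self_eq_zero' (x : Fin s → ZMod 2) : x + x = 0 := by
  funext j
  have h : ∀ a : ZMod 2, a + a = 0 := by decide
  exact h (x j)

lemma neg_eq_self' (x : Fin s → ZMod 2) : -x = x :=
  neg_eq_of_add_eq_zero_left (add_self_eq_zero' x)

lemma rho_i₀ (e : Fin s → ZMod 2) (i₀ : Fin s) (he : e i₀ = 1)
    (u : Fin s → ZMod 2) : (rho e i₀ u) i₀ = 1 := by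
  unfold rho
  by_cases h : u i₀ = 1
  · simp [h]
  · have h0 : u i₀ = 0 := by
      have : ∀ a : ZMod 2, a ≠ 1 → a = 0 := by decide
      exact this _ h
    simp [h, Pi.add_apply, h0, he]

lemma rho_eq_cases (e : Fin s → ZMod 2) (i₀ : Fin s)
    {w u : Fin s → ZMod 2} (h : rho e i₀ w = rho e i₀ u) : w = u ∨ w = u + e := by
  unfold rho at h
  by_cases hw : w i₀ = 1 <;> by_cases hu : u i₀ = 1 <;> simp [hw, hu] at h
  · exact Or.inl h
  · exact Or.inr h
  · right
    have := congrArg (· + e) h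
    simpa [add_assoc, add_self_eq_zero'] using this
  · left
    have := congrArg (· + e) h
    simpa [add_assoc, add_self_eq_zero'] using this

variable {ι : Type} [DecidableEq ι]

/-- the conclusion of the core lemma -/
def Goal (e : Fin s → ZMod 2) (i₀ : Fin s) (J : Finset ι)
    (T : ι → Finset (Fin s → ZMod 2)) : Prop :=
  ∃ 𝒜 : Finset (Finset ι),
    (∀ A ∈ 𝒜, A ⊆ J) ∧
    (∀ A ∈ 𝒜, ∑ j ∈ A, (e + ∑ u ∈ T j, u) = e) ∧
    (∀ A ∈ 𝒜, ∀ B ∈ 𝒜, A ≠ B → Disjoint A B) ∧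
    J.card ≤ 𝒜.card + ((J.biUnion T).image (rho e i₀)).card

lemma goal_allempty (e : Fin s → ZMod 2) (i₀ : Fin s) (J : Finset ι)
    (T : ι → Finset (Fin s → ZMod 2)) (hE : ∀ j ∈ J, T j = ∅) :
    Goal e i₀ J T := by
  refine ⟨J.image (fun j => ({j} : Finset ι)), ?_, ?_, ?_, ?_⟩
  · intro A hA
    obtain ⟨j, hj, rfl⟩ := Finset.mem_image.1 hA
    simpa using hj
  · intro A hA
    obtain ⟨j, hj, rfl⟩ := Finset.mem_image.1 hA
    simp [hE j hj]
  · intro A hA B hB hne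
    obtain ⟨j, hj, rfl⟩ := Finset.mem_image.1 hA
    obtain ⟨j', hj', rfl⟩ := Finset.mem_image.1 hB
    have : j ≠ j' := fun h => hne (by rw [h])
    simp [Finset.disjoint_singleton, this, this.symm]
  · have : (J.image (fun j => ({j} : Finset ι))).card = J.card :=
      Finset.card_image_of_injective _ (fun a b h => by
        simpa using h)
    omega

lemma core (e : Fin s → ZMod 2) (i₀ : Fin s) (he : e i₀ = 1) :
    ∀ (N : ℕ) (J : Finset ι) (T : ι → Finset (Fin s → ZMod 2)),
      (∑ j ∈ J, (T j).card) ≤ N →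
      (∀ j ∈ J, ∀ j' ∈ J, j ≠ j' → Disjoint (T j) (T j')) →
      Goal e i₀ J T := by
  intro N
  induction N with
  | zero =>
    intro J T hN hdisj
    refine goal_allempty e i₀ J T (fun j hj => ?_)
    have : (T j).card = 0 := by
      have := Finset.sum_eq_zero_iff.1 (Nat.le_zero.1 hN) j hj
      exact this
    exact Finset.card_eq_zero.1 this
  | succ N ih =>
    intro J T hN hdisj
    by_cases hE : ∀ j ∈ J, T j = ∅
    · exact goal_allempty e i₀ J T hE
    · push_neg at hE
      obtain ⟨j₀, hj₀J, hj₀ne⟩ := hE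
      obtain ⟨u, hu⟩ := hj₀ne
      have hcard₀ : 1 ≤ (T j₀).card := Finset.card_pos.2 ⟨u, hu⟩
      have hee : e ≠ 0 := by
        intro h
        rw [h] at he
        simp at he
      have huu' : u ≠ u + e := fun h => hee (left_eq_add.mp h)
      by_cases hB : ∃ j₁ ∈ J, j₁ ≠ j₀ ∧ (u + e) ∈ T j₁
      · -- MERGE case
        obtain ⟨j₁, hj₁J, hj₁ne, hu'⟩ := hB
        have hj₀j₁ : j₀ ≠ j₁ := fun h => hj₁ne h.symm
        set T' := Function.update T j₀ ((T j₀ ∪ T j₁) \ {u, u + e}) with hT'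
        set J' := J.erase j₁ with hJ'
        have hj₀J' : j₀ ∈ J' := Finset.mem_erase.2 ⟨hj₀j₁, hj₀J⟩
        have hj₁J' : j₁ ∉ J' := Finset.notMem_erase _ _
        have hdT : Disjoint (T j₀) (T j₁) := hdisj j₀ hj₀J j₁ hj₁J hj₀j₁
        have hpair_sub : ({u, u + e} : Finset (Fin s → ZMod 2)) ⊆ T j₀ ∪ T j₁ := by
          intro x hx
          rcases Finset.mem_insert.1 hx with h | h
          · exact Finset.mem_union_left _ (h ▸ hu)
          · exact Finset.mem_union_right _ ((Finset.mem_singleton.1 h) ▸ hu')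
        have hcard₁ : 1 ≤ (T j₁).card := Finset.card_pos.2 ⟨_, hu'⟩
        have hT'j₀ : T' j₀ = (T j₀ ∪ T j₁) \ {u, u + e} := by
          rw [hT']; simp [Function.update_self]
        have hT'ne : ∀ j, j ≠ j₀ → T' j = T j := fun j hj => by
          rw [hT']; exact Function.update_of_ne hj _ _
        have hcard' : (T' j₀).card = (T j₀).card + (T j₁).card - 2 := by
          rw [hT'j₀, Finset.card_sdiff_of_subset hpair_sub, Finset.card_union_of_disjoint hdT,
            Finset.card_pair huu']
        have hsum' : ∑ j ∈ J', (T' j).card ≤ N := by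
          have e1 : (T' j₀).card + ∑ j ∈ J'.erase j₀, (T' j).card = ∑ j ∈ J', (T' j).card :=
            Finset.add_sum_erase _ (fun j => (T' j).card) hj₀J'
          have e2 : ∑ j ∈ J'.erase j₀, (T' j).card = ∑ j ∈ J'.erase j₀, (T j).card :=
            Finset.sum_congr rfl (fun j hj => by rw [hT'ne j (Finset.ne_of_mem_erase hj)])
          have e3 : (T j₁).card + ∑ j ∈ J', (T j).card = ∑ j ∈ J, (T j).card :=
            Finset.add_sum_erase _ (fun j => (T j).card) hj₁J
          have e4 : (T j₀).card + ∑ j ∈ J'.erase j₀, (T j).card = ∑ j ∈ J', (T j).card :=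
            Finset.add_sum_erase _ (fun j => (T j).card) hj₀J'
          omega
        have hdisj' : ∀ j ∈ J', ∀ j' ∈ J', j ≠ j' → Disjoint (T' j) (T' j') := by
          have key : ∀ j' ∈ J', j' ≠ j₀ → Disjoint (T' j₀) (T' j') := by
            intro j' hj' hne'
            rw [hT'ne j' hne', hT'j₀]
            have hj'J : j' ∈ J := Finset.mem_of_mem_erase hj'
            have h1 : Disjoint (T j₀) (T j') := hdisj j₀ hj₀J j' hj'J (Ne.symm hne')
            have h2 : Disjoint (T j₁) (T j') :=
              hdisj j₁ hj₁J j' hj'J (fun h => hj₁J' (h ▸ hj'))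
            exact Disjoint.mono_left (Finset.sdiff_subset) (Finset.disjoint_union_left.2 ⟨h1, h2⟩)
          intro j hj j' hj' hne
          by_cases hjj₀ : j = j₀
          · exact hjj₀ ▸ key j' hj' (fun h => hne (by rw [hjj₀, h]))
          · by_cases hj'j₀ : j' = j₀
            · exact (Disjoint.symm (hj'j₀ ▸ key j hj hjj₀))
            · rw [hT'ne j hjj₀, hT'ne j' hj'j₀]
              exact hdisj j (Finset.mem_of_mem_erase hj) j' (Finset.mem_of_mem_erase hj') hne
        obtain ⟨𝒜', hh1, hh2, hh3, hh4⟩ := ih J' T' hsum' hdisj'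
        have hAj₁ : ∀ A ∈ 𝒜', j₁ ∉ A := fun A hA h => hj₁J' (hh1 A hA h)
        set φ : Finset ι → Finset ι := fun A => if j₀ ∈ A then insert j₁ A else A with hφ
        have hφsub : ∀ A ∈ 𝒜', φ A ⊆ J := by
          intro A hA
          have hAJ : A ⊆ J := (hh1 A hA).trans (Finset.erase_subset _ _)
          by_cases h : j₀ ∈ A
          · simp only [hφ, if_pos h]
            exact Finset.insert_subset hj₁J hAJ
          · simpa only [hφ, if_neg h] using hAJ
        have hinj : ∀ A ∈ 𝒜', ∀ B ∈ 𝒜', φ A = φ B → A = B := by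
          intro A hA B hB hEq
          by_contra hne
          have hd := hh3 A hA B hB hne
          by_cases h1 : j₀ ∈ A <;> by_cases h2 : j₀ ∈ B
          · exact (Finset.disjoint_left.1 hd) h1 h2
          · simp only [hφ, if_pos h1, if_neg h2] at hEq
            exact hAj₁ B hB (hEq ▸ Finset.mem_insert_self j₁ A)
          · simp only [hφ, if_neg h1, if_pos h2] at hEq
            exact hAj₁ A hA (hEq ▸ Finset.mem_insert_self j₁ B)
          · simp only [hφ, if_neg h1, if_neg h2] at hEq
            exact hne hEq
        refine ⟨𝒜'.image φ, ?_, ?_, ?_, ?_⟩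
        · intro A hA
          obtain ⟨A', hA', rfl⟩ := Finset.mem_image.1 hA
          exact hφsub A' hA'
        · intro A hA
          obtain ⟨A', hA', rfl⟩ := Finset.mem_image.1 hA
          have hsA' := hh2 A' hA'
          by_cases h : j₀ ∈ A'
          · simp only [hφ, if_pos h]
            have hj₁A' : j₁ ∉ A' := hAj₁ A' hA'
            rw [Finset.sum_insert hj₁A']
            have eA : (e + ∑ v ∈ T j₀, v) + ∑ j ∈ A'.erase j₀, (e + ∑ v ∈ T j, v)
                = ∑ j ∈ A', (e + ∑ v ∈ T j, v) :=
              Finset.add_sum_erase _ (fun j => (e + ∑ v ∈ T j, v)) h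
            have eA' : (e + ∑ v ∈ T' j₀, v) + ∑ j ∈ A'.erase j₀, (e + ∑ v ∈ T' j, v)
                = ∑ j ∈ A', (e + ∑ v ∈ T' j, v) :=
              Finset.add_sum_erase _ (fun j => (e + ∑ v ∈ T' j, v)) h
            have eEr : ∑ j ∈ A'.erase j₀, (e + ∑ v ∈ T' j, v)
                = ∑ j ∈ A'.erase j₀, (e + ∑ v ∈ T j, v) :=
              Finset.sum_congr rfl (fun j hj => by rw [hT'ne j (Finset.ne_of_mem_erase hj)])
            have key : (e + ∑ v ∈ T j₁, v) + (e + ∑ v ∈ T j₀, v) = e + ∑ v ∈ T' j₀, v := by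
              rw [hT'j₀, Finset.sum_sdiff_eq_sub hpair_sub, Finset.sum_union hdT,
                Finset.sum_pair huu']
              have hup : u + (u + e) = e := by rw [← add_assoc, add_self_eq_zero', zero_add]
              rw [hup, sub_eq_add_neg, neg_eq_self']
              abel
            rw [← eA, ← add_assoc, key, ← eEr, eA']
            exact hsA'
          · simp only [hφ, if_neg h]
            have hcg : ∑ j ∈ A', (e + ∑ v ∈ T' j, v) = ∑ j ∈ A', (e + ∑ v ∈ T j, v) :=
              Finset.sum_congr rfl (fun j hj => by rw [hT'ne j (fun hh => h (hh ▸ hj))])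
            rw [← hcg]
            exact hsA'
        · intro X hX Y hY hne
          obtain ⟨A, hA, rfl⟩ := Finset.mem_image.1 hX
          obtain ⟨B, hB, rfl⟩ := Finset.mem_image.1 hY
          have hABne : A ≠ B := fun h => hne (by rw [h])
          have hd := hh3 A hA B hB hABne
          by_cases h1 : j₀ ∈ A <;> by_cases h2 : j₀ ∈ B
          · exact absurd ((Finset.disjoint_left.1 hd) h1 h2) (fun h => h)
          · simp only [hφ, if_pos h1, if_neg h2]
            exact Finset.disjoint_insert_left.2 ⟨hAj₁ B hB, hd⟩
          · simp only [hφ, if_neg h1, if_pos h2]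
            exact Finset.disjoint_insert_right.2 ⟨hAj₁ A hA, hd⟩
          · simpa only [hφ, if_neg h1, if_neg h2] using hd
        · have hcard𝒜 : (𝒜'.image φ).card = 𝒜'.card := Finset.card_image_of_injOn hinj
          have hsub : (J'.biUnion T').image (rho e i₀) ⊆
              ((J.biUnion T).image (rho e i₀)).erase (rho e i₀ u) := by
            intro y hy
            obtain ⟨w, hw, rfl⟩ := Finset.mem_image.1 hy
            obtain ⟨j, hj, hwj⟩ := Finset.mem_biUnion.1 hw
            have hjJ : j ∈ J := Finset.mem_of_mem_erase hj
            have hjne₁ : j ≠ j₁ := Finset.ne_of_mem_erase hj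
            have hwJ : w ∈ J.biUnion T := by
              by_cases hjj₀ : j = j₀
              · subst hjj₀
                rw [hT'j₀] at hwj
                rcases Finset.mem_union.1 (Finset.mem_sdiff.1 hwj).1 with h | h
                · exact Finset.mem_biUnion.2 ⟨j, hjJ, h⟩
                · exact Finset.mem_biUnion.2 ⟨j₁, hj₁J, h⟩
              · rw [hT'ne j hjj₀] at hwj
                exact Finset.mem_biUnion.2 ⟨j, hjJ, hwj⟩
            refine Finset.mem_erase.2 ⟨?_, Finset.mem_image.2 ⟨w, hwJ, rfl⟩⟩
            intro hEq
            have hwcases := rho_eq_cases e i₀ hEq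
            by_cases hjj₀ : j = j₀
            · subst hjj₀
              rw [hT'j₀] at hwj
              have := (Finset.mem_sdiff.1 hwj).2
              rcases hwcases with h | h
              · exact this (h ▸ Finset.mem_insert_self _ _)
              · exact this (h ▸ Finset.mem_insert_of_mem (Finset.mem_singleton_self _))
            · rw [hT'ne j hjj₀] at hwj
              rcases hwcases with h | h
              · exact (Finset.disjoint_left.1 (hdisj j hjJ j₀ hj₀J hjj₀)) hwj (h ▸ hu)
              · exact (Finset.disjoint_left.1 (hdisj j hjJ j₁ hj₁J hjne₁)) hwj (h ▸ hu')
          have hmem : rho e i₀ u ∈ (J.biUnion T).image (rho e i₀) :=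
            Finset.mem_image.2 ⟨u, Finset.mem_biUnion.2 ⟨j₀, hj₀J, hu⟩, rfl⟩
          have hle := Finset.card_le_card hsub
          rw [Finset.card_erase_of_mem hmem] at hle
          have hc1 : 0 < J.card := Finset.card_pos.2 ⟨j₀, hj₀J⟩
          have hc2 : J'.card = J.card - 1 := Finset.card_erase_of_mem hj₁J
          have hΦpos : 0 < ((J.biUnion T).image (rho e i₀)).card :=
            Finset.card_pos.2 ⟨_, hmem⟩
          omega

      · -- DELETE case
        push_neg at hB
        set J' := J.erase j₀ with hJ'
        have hsum' : ∑ j ∈ J', (T j).card ≤ N := by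
          have hh : (∑ j ∈ J', (T j).card) + (T j₀).card = ∑ j ∈ J, (T j).card :=
            Finset.sum_erase_add J _ hj₀J
          omega
        have hdisj' : ∀ j ∈ J', ∀ j' ∈ J', j ≠ j' → Disjoint (T j) (T j') :=
          fun j hj j' hj' hne =>
            hdisj j (Finset.mem_of_mem_erase hj) j' (Finset.mem_of_mem_erase hj') hne
        obtain ⟨𝒜, h1, h2, h3, h4⟩ := ih J' T hsum' hdisj'
        refine ⟨𝒜, fun A hA => (h1 A hA).trans (Finset.erase_subset _ _), h2, h3, ?_⟩
        have hsub : (J'.biUnion T).image (rho e i₀) ⊆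
            ((J.biUnion T).image (rho e i₀)).erase (rho e i₀ u) := by
          intro y hy
          obtain ⟨w, hw, rfl⟩ := Finset.mem_image.1 hy
          obtain ⟨j, hj, hwj⟩ := Finset.mem_biUnion.1 hw
          have hjJ : j ∈ J := Finset.mem_of_mem_erase hj
          have hjne : j ≠ j₀ := Finset.ne_of_mem_erase hj
          refine Finset.mem_erase.2 ⟨?_,
            Finset.mem_image.2 ⟨w, Finset.mem_biUnion.2 ⟨j, hjJ, hwj⟩, rfl⟩⟩
          intro hEq
          rcases rho_eq_cases e i₀ hEq with h | h
          · subst h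
            exact (Finset.disjoint_left.1 (hdisj j hjJ j₀ hj₀J hjne)) hwj hu
          · subst h
            exact hB j hjJ hjne hwj
        have hmem : rho e i₀ u ∈ (J.biUnion T).image (rho e i₀) :=
          Finset.mem_image.2 ⟨u, Finset.mem_biUnion.2 ⟨j₀, hj₀J, hu⟩, rfl⟩
        have hle := Finset.card_le_card hsub
        rw [Finset.card_erase_of_mem hmem] at hle
        have hc1 : 0 < J.card := Finset.card_pos.2 ⟨j₀, hj₀J⟩
        have hc2 : J'.card = J.card - 1 := Finset.card_erase_of_mem hj₀J
        have hΦpos : 0 < ((J.biUnion T).image (rho e i₀)).card :=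
          Finset.card_pos.2 ⟨_, hmem⟩
        omega

lemma card_filter_eq (e : Fin s → ZMod 2) (i₀ : Fin s) (he : e i₀ = 1) :
    (Finset.univ.filter (fun x : Fin s → ZMod 2 => x i₀ = 1)).card = 2 ^ (s - 1) := by
  classical
  set F1 := Finset.univ.filter (fun x : Fin s → ZMod 2 => x i₀ = 1) with hF1
  set F0 := Finset.univ.filter (fun x : Fin s → ZMod 2 => ¬ (x i₀ = 1)) with hF0
  have hadd : F1.card + F0.card = 2 ^ s := by
    rw [hF1, hF0, Finset.card_filter_add_card_filter_not, Finset.card_univ]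
    simp [ZMod.card 2]
  have hbij : F1.card = F0.card := by
    apply Finset.card_bij' (fun a _ => a + e) (fun a _ => a + e)
    · intro a ha
      have h1 : a i₀ = 1 := (Finset.mem_filter.1 ha).2
      refine Finset.mem_filter.2 ⟨Finset.mem_univ _, ?_⟩
      simp [Pi.add_apply, h1, he]
    · intro a ha
      have h1 : ¬ (a i₀ = 1) := (Finset.mem_filter.1 ha).2
      have h0 : a i₀ = 0 := by
        have : ∀ b : ZMod 2, b ≠ 1 → b = 0 := by decide
        exact this _ h1
      refine Finset.mem_filter.2 ⟨Finset.mem_univ _, ?_⟩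
      simp [Pi.add_apply, h0, he]
    · intro a _
      rw [add_assoc, add_self_eq_zero', add_zero]
    · intro a _
      rw [add_assoc, add_self_eq_zero', add_zero]
  have hs : 0 < s := i₀.pos
  have hp : 2 ^ s = 2 ^ (s - 1) * 2 := by
    rw [← pow_succ]
    congr 1
    omega
  omega

lemma image_rho_card_le (e : Fin s → ZMod 2) (i₀ : Fin s) (he : e i₀ = 1)
    (W : Finset (Fin s → ZMod 2)) :
    (W.image (rho e i₀)).card ≤ 2 ^ (s - 1) := by
  classical
  have hsub : W.image (rho e i₀) ⊆ Finset.univ.filter (fun x => x i₀ = 1) := by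
    intro y hy
    obtain ⟨w, hw, rfl⟩ := Finset.mem_image.1 hy
    exact Finset.mem_filter.2 ⟨Finset.mem_univ _, rho_i₀ e i₀ he w⟩
  exact (Finset.card_le_card hsub).trans (card_filter_eq e i₀ he).le


end PIRCore

/-- If a `k`-PIR generator matrix contains every nonzero vector of `𝔽₂ˢ` at
least once as a column, then `n ≥ P(s, k - 2^{s-1}) + 2^s - 1`. -/
theorem stmt_12 (s k n : ℕ) (hs : 0 < s) (hk : 2 ^ (s - 1) < k)
    (G : Matrix (Fin s) (Fin n) (ZMod 2)) (hG : IsPIRMatrix s n k G)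
    (hall : ∀ p : Fin s → ZMod 2, p ≠ 0 →
      ∃ j : Fin n, (fun r : Fin s => G r j) = p) :
    PIRlen s (k - 2 ^ (s - 1)) + (2 ^ s - 1) ≤ n := by
  classical
  set k' := k - 2 ^ (s - 1) with hk'def
  set col : Fin n → (Fin s → ZMod 2) := fun h => (fun r => G r h) with hcol
  have hchoice : ∀ p : {p : Fin s → ZMod 2 // p ≠ 0}, ∃ j : Fin n, col j = p.1 :=
    fun p => hall p.1 p.2
  choose χ hχ using hchoice
  have hχinj : Function.Injective χ := by
    intro p q h
    apply Subtype.ext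
    rw [← hχ p, ← hχ q, h]
  set S : Finset (Fin n) := Finset.univ.image χ with hS
  have hScard : S.card = 2 ^ s - 1 := by
    rw [hS, Finset.card_image_of_injective _ hχinj, Finset.card_univ]
    have h1 : Fintype.card {p : Fin s → ZMod 2 // p ≠ 0}
        = Fintype.card (Fin s → ZMod 2) - 1 := by
      rw [Fintype.card_subtype_compl, Fintype.card_subtype_eq]
    rw [h1]
    congr 1
    simp [ZMod.card 2]
  have hn2 : 2 ^ s - 1 ≤ n := by
    calc 2 ^ s - 1 = S.card := hScard.symm
    _ ≤ (Finset.univ : Finset (Fin n)).card := Finset.card_le_card (Finset.subset_univ S)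
    _ = n := by simp
  set n' := n - (2 ^ s - 1) with hn'def
  set C : Finset (Fin n) := Sᶜ with hC
  have hCcard : C.card = n' := by
    rw [hC, Finset.card_compl, hScard]
    simp [hn'def]
  set ψ : {x // x ∈ C} ≃ Fin C.card := C.equivFin with hψ
  set G' : Matrix (Fin s) (Fin n') (ZMod 2) :=
    Matrix.of (fun r m => G r (ψ.symm (finCongr hCcard.symm m)).1) with hG'
  set θ : {x // x ∈ C} → Fin n' := fun x => finCongr hCcard (ψ x) with hθdef
  have hθcol : ∀ (x : {x // x ∈ C}) (r : Fin s), G' r (θ x) = G r x.1 := by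
    intro x r
    rw [hG', hθdef]
    simp only [Matrix.of_apply]
    congr 1
    have : finCongr hCcard.symm (finCongr hCcard (ψ x)) = ψ x := by
      simp
    rw [this, Equiv.symm_apply_apply]
  have hθinj : Function.Injective θ := by
    intro x y h
    apply ψ.injective
    have := (finCongr hCcard).injective h
    exact this
  have hcolinjS : ∀ h₁ ∈ S, ∀ h₂ ∈ S, col h₁ = col h₂ → h₁ = h₂ := by
    intro h₁ hh₁ h₂ hh₂ hEq
    obtain ⟨p, _, rfl⟩ := Finset.mem_image.1 hh₁
    obtain ⟨q, _, rfl⟩ := Finset.mem_image.1 hh₂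
    rw [hχ p, hχ q] at hEq
    exact congrArg χ (Subtype.ext hEq)
  have hk'pos : 0 < k' := by
    rw [hk'def]; omega
  have hPIR' : IsPIRMatrix s n' k' G' := by
    intro i
    obtain ⟨R, hRdisj, hRsum⟩ := hG i
    set e : Fin s → ZMod 2 := Pi.single i 1 with he'
    have hei : e i = 1 := by simp [he']
    set T : Fin k → Finset (Fin s → ZMod 2) := fun j => (R j ∩ S).image col with hT
    have hTdisj : ∀ j ∈ (Finset.univ : Finset (Fin k)), ∀ j' ∈ (Finset.univ : Finset (Fin k)),
        j ≠ j' → Disjoint (T j) (T j') := by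
      intro j _ j' _ hne
      rw [Finset.disjoint_left]
      intro v hv hv'
      obtain ⟨h₁, hh₁, rfl⟩ := Finset.mem_image.1 hv
      obtain ⟨h₂, hh₂, hEq⟩ := Finset.mem_image.1 hv'
      have h21 := hcolinjS h₂ (Finset.mem_inter.1 hh₂).2 h₁ (Finset.mem_inter.1 hh₁).2 hEq
      subst h21
      exact Finset.disjoint_left.1 (hRdisj j j' hne) (Finset.mem_inter.1 hh₁).1
        (Finset.mem_inter.1 hh₂).1
    obtain ⟨𝒜, hA1, hA2, hA3, hA4⟩ := PIRCore.core e i hei (∑ j, (T j).card)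
      Finset.univ T le_rfl hTdisj
    have hcard𝒜 : k' ≤ 𝒜.card := by
      have h1 : ((Finset.univ.biUnion T).image (PIRCore.rho e i)).card ≤ 2 ^ (s - 1) :=
        PIRCore.image_rho_card_le e i hei _
      have h2 : (Finset.univ : Finset (Fin k)).card = k := by simp
      omega
    have hxj : ∀ j : Fin k, ∑ h ∈ R j \ S, col h = e + ∑ v ∈ T j, v := by
      intro j
      have hsplit : (∑ h ∈ R j ∩ S, col h) + ∑ h ∈ R j \ S, col h = ∑ h ∈ R j, col h :=
        Finset.sum_inter_add_sum_sdiff _ _ _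
      have hTsum : ∑ v ∈ T j, v = ∑ h ∈ R j ∩ S, col h := by
        rw [hT]
        exact Finset.sum_image (fun a ha b hb hEq => hcolinjS a (Finset.mem_inter.1 ha).2
          b (Finset.mem_inter.1 hb).2 hEq)
      have hRe : ∑ h ∈ R j, col h = e := hRsum j
      rw [← hTsum, hRe] at hsplit
      have h2 := congrArg (fun z => (∑ v ∈ T j, v) + z) hsplit
      simp only [← add_assoc, PIRCore.add_self_eq_zero', zero_add] at h2
      rw [h2, add_comm]
    -- choose k' groups
    set η := 𝒜.equivFin with hη
    set pick : Fin k' → Finset (Fin k) := fun m => (η.symm (Fin.castLE hcard𝒜 m)).1 with hpick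
    have hpickmem : ∀ m, pick m ∈ 𝒜 := fun m => (η.symm _).2
    have hpickinj : ∀ m m' : Fin k', m ≠ m' → pick m ≠ pick m' := by
      intro m m' hne hEq
      apply hne
      have h1 := η.symm.injective (Subtype.ext hEq)
      have h2 := congrArg Fin.val h1
      exact Fin.ext (by simpa using h2)
    set U : Fin k' → Finset (Fin n) := fun m => (pick m).biUnion (fun j => R j \ S) with hU
    have hUC : ∀ m, ∀ h ∈ U m, h ∈ C := by
      intro m h hh
      obtain ⟨j, _, hj⟩ := Finset.mem_biUnion.1 hh
      rw [hC]
      exact Finset.mem_compl.2 (Finset.mem_sdiff.1 hj).2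
    set R' : Fin k' → Finset (Fin n') :=
      fun m => (U m).attach.image (fun h => θ ⟨h.1, hUC m h.1 h.2⟩) with hR'
    refine ⟨R', ?_, ?_⟩
    · -- disjointness
      intro m m' hne
      rw [Finset.disjoint_left]
      intro y hy hy'
      obtain ⟨h₁, _, rfl⟩ := Finset.mem_image.1 hy
      obtain ⟨h₂, _, hEq⟩ := Finset.mem_image.1 hy'
      have hval : h₂.1 = h₁.1 := congrArg Subtype.val (hθinj hEq)
      obtain ⟨j, hjm, hj⟩ := Finset.mem_biUnion.1 h₁.2
      obtain ⟨j', hjm', hj'⟩ := Finset.mem_biUnion.1 h₂.2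
      rw [hval] at hj'
      have hjj' : j ≠ j' := by
        intro hEq2
        subst hEq2
        have hd := hA3 (pick m) (hpickmem m) (pick m') (hpickmem m') (hpickinj m m' hne)
        exact Finset.disjoint_left.1 hd hjm hjm'
      exact Finset.disjoint_left.1 (hRdisj j j' hjj')
        (Finset.mem_sdiff.1 hj).1 (Finset.mem_sdiff.1 hj').1
    · -- sums
      intro m
      have hinj2 : ∀ a ∈ (U m).attach, ∀ b ∈ (U m).attach,
          θ ⟨a.1, hUC m a.1 a.2⟩ = θ ⟨b.1, hUC m b.1 b.2⟩ → a = b := by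
        intro a _ b _ hEq
        have := congrArg Subtype.val (hθinj hEq)
        exact Subtype.ext this
      rw [hR']
      rw [Finset.sum_image hinj2]
      have hstep : ∀ a : {x // x ∈ U m},
          (fun r => G' r (θ ⟨a.1, hUC m a.1 a.2⟩)) = col a.1 := by
        intro a
        funext r
        rw [hθcol]
      calc ∑ a ∈ (U m).attach, (fun r => G' r (θ ⟨a.1, hUC m a.1 a.2⟩))
          = ∑ a ∈ (U m).attach, col a.1 := by
            exact Finset.sum_congr rfl (fun a _ => hstep a)
        _ = ∑ h ∈ U m, col h := Finset.sum_attach _ _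
        _ = ∑ j ∈ pick m, ∑ h ∈ R j \ S, col h := by
            rw [hU]
            refine Finset.sum_biUnion ?_
            intro a _ b _ hab
            exact Disjoint.mono Finset.sdiff_subset Finset.sdiff_subset (hRdisj a b hab)
        _ = ∑ j ∈ pick m, (e + ∑ v ∈ T j, v) := Finset.sum_congr rfl (fun j _ => hxj j)
        _ = e := hA2 (pick m) (hpickmem m)
  -- conclude
  have hn'pos : 0 < n' := by
    by_contra hc
    push_neg at hc
    have hn0 : n' = 0 := by omega
    obtain ⟨R', hd, hsum⟩ := hPIR' ⟨0, hs⟩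
    have hempty : R' ⟨0, hk'pos⟩ = ∅ := by
      apply Finset.eq_empty_of_forall_notMem
      intro x _
      have := x.isLt
      omega
    have h0 := hsum ⟨0, hk'pos⟩
    rw [hempty, Finset.sum_empty] at h0
    have := congrFun h0 ⟨0, hs⟩
    simp [Pi.single_eq_same] at this
  have hmem : n' ∈ {m : ℕ | 0 < m ∧
      ∃ G₀ : Matrix (Fin s) (Fin m) (ZMod 2), IsPIRMatrix s m k' G₀} :=
    ⟨hn'pos, G', hPIR'⟩
  have hinf : PIRlen s k' ≤ n' := Nat.sInf_le hmem
  omega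
end

section
/- For every integer s ≥ 4 and every integer ℓ ≥ 0 one has P(s, 2^{s-2} + ℓ·2^{s-1}) ≥ ℓ·(2^s − 1) + 2^{s-1} + 1. -/
namespace PIR13

open Finset Matrix

variable {s n k : ℕ}

local notation "V" => (Fin s → ZMod 2)

lemma zmod2_em (x : ZMod 2) : x = 0 ∨ x = 1 := by revert x; decide

lemma exists_coord (p : V) (hp : p ≠ 0) : ∃ r, p r = 1 := by
  by_contra hcon
  push_neg at hcon
  apply hp
  funext r
  rcases zmod2_em (p r) with h | h
  · simpa using h
  · exact absurd h (hcon r)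

lemma dot_single (v : V) (r : Fin s) : v ⬝ᵥ Pi.single r 1 = v r := dotProduct_single_one v r

lemma exists_dot_one_zero (p q : V) (hp : p ≠ 0) (hq : q ≠ p) :
    ∃ e : V, e ⬝ᵥ p = 1 ∧ e ⬝ᵥ q = 0 := by
  by_cases hc : ∃ r, p r = 1 ∧ q r = 0
  · obtain ⟨r, hr1, hr0⟩ := hc
    exact ⟨Pi.single r 1, by rw [single_dotProduct, one_mul, hr1],
      by rw [single_dotProduct, one_mul, hr0]⟩
  · push_neg at hc
    obtain ⟨r₁, hr₁⟩ := exists_coord p hp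
    have hq₁ : q r₁ = 1 := by
      rcases zmod2_em (q r₁) with h | h
      · exact absurd h (hc r₁ hr₁)
      · exact h
    have : ∃ r₂, p r₂ ≠ q r₂ := by
      by_contra hcon; push_neg at hcon; exact hq (funext fun r => (hcon r).symm)
    obtain ⟨r₂, hr₂⟩ := this
    have hp₂ : p r₂ = 0 := by
      rcases zmod2_em (p r₂) with h | h
      · exact h
      · rcases zmod2_em (q r₂) with h' | h'
        · exact absurd h' (hc r₂ h)
        · exact absurd (h.trans h'.symm) hr₂
    have hq₂ : q r₂ = 1 := by
      rcases zmod2_em (q r₂) with h | h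
      · exact absurd (hp₂.trans h.symm) hr₂
      · exact h
    refine ⟨Pi.single r₁ 1 + Pi.single r₂ 1, ?_, ?_⟩
    · rw [add_dotProduct, single_dotProduct, single_dotProduct, one_mul, one_mul, hr₁, hp₂,
        add_zero]
    · rw [add_dotProduct, single_dotProduct, single_dotProduct, one_mul, one_mul, hq₁, hq₂]
      decide

lemma card_fiber (hs : 1 ≤ s) (p : V) (hp : p ≠ 0) :
    (univ.filter fun v : V => v ⬝ᵥ p = 1).card = 2 ^ (s - 1) := by
  obtain ⟨r, hr⟩ := exists_coord p hp
  set e : V := Pi.single r 1 with he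
  have hedot : e ⬝ᵥ p = 1 := by rw [he, single_dotProduct, one_mul, hr]
  have key : (univ.filter fun v : V => v ⬝ᵥ p = 1).card
      = (univ.filter fun v : V => ¬(v ⬝ᵥ p = 1)).card := by
    apply Finset.card_bij' (fun v _ => v + e) (fun v _ => v + e)
    · intro a ha
      simp only [mem_filter, mem_univ, true_and] at ha ⊢
      rw [add_dotProduct, ha, hedot]
      decide
    · intro a ha
      simp only [mem_filter, mem_univ, true_and] at ha ⊢
      rcases zmod2_em (a ⬝ᵥ p) with h | h
      · rw [add_dotProduct, h, hedot, zero_add]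
      · exact absurd h ha
    · intro a _
      funext r'
      simp [CharTwo.add_self_eq_zero, add_assoc]
    · intro a _
      funext r'
      simp [CharTwo.add_self_eq_zero, add_assoc]
  have htot := Finset.card_filter_add_card_filter_not
    (s := (univ : Finset V)) (fun v : V => v ⬝ᵥ p = 1)
  have hcard : (univ : Finset V).card = 2 ^ s := by simp
  have hpow : 2 ^ s = 2 * 2 ^ (s - 1) := by
    rw [← pow_succ']
    congr 1
    omega
  omega

lemma card_fiber_pair (hs : 2 ≤ s) (p q : V) (hp : p ≠ 0) (hq : q ≠ 0) (hpq : q ≠ p) :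
    (univ.filter fun v : V => v ⬝ᵥ p = 1 ∧ v ⬝ᵥ q = 1).card = 2 ^ (s - 2) := by
  obtain ⟨e, heq, hep⟩ := exists_dot_one_zero q p hq (Ne.symm hpq)
  have key : (univ.filter fun v : V => v ⬝ᵥ p = 1 ∧ v ⬝ᵥ q = 1).card
      = (univ.filter fun v : V => v ⬝ᵥ p = 1 ∧ ¬(v ⬝ᵥ q = 1)).card := by
    apply Finset.card_bij' (fun v _ => v + e) (fun v _ => v + e)
    · intro a ha
      simp only [mem_filter, mem_univ, true_and] at ha ⊢
      obtain ⟨h1, h2⟩ := ha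
      refine ⟨by rw [add_dotProduct, h1, hep, add_zero], ?_⟩
      rw [add_dotProduct, h2, heq]
      decide
    · intro a ha
      simp only [mem_filter, mem_univ, true_and] at ha ⊢
      obtain ⟨h1, h2⟩ := ha
      refine ⟨by rw [add_dotProduct, h1, hep, add_zero], ?_⟩
      rcases zmod2_em (a ⬝ᵥ q) with h | h
      · rw [add_dotProduct, h, heq, zero_add]
      · exact absurd h h2
    · intro a _
      funext r'
      simp [CharTwo.add_self_eq_zero, add_assoc]
    · intro a _
      funext r'
      simp [CharTwo.add_self_eq_zero, add_assoc]
  have hff : ∀ (Q : V → Prop) (_ : DecidablePred Q),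
      ((univ.filter fun v : V => v ⬝ᵥ p = 1).filter Q)
        = univ.filter fun v : V => v ⬝ᵥ p = 1 ∧ Q v := fun Q _ => by
    rw [Finset.filter_filter]
  have htot := Finset.card_filter_add_card_filter_not
    (s := (univ.filter fun v : V => v ⬝ᵥ p = 1)) (fun v : V => v ⬝ᵥ q = 1)
  rw [hff _ inferInstance, hff _ inferInstance, card_fiber (by omega) p hp] at htot
  have hpow : 2 ^ (s - 1) = 2 * 2 ^ (s - 2) := by
    rw [← pow_succ']
    congr 1
    omega
  omega

abbrev col (G : Matrix (Fin s) (Fin n) (ZMod 2)) (h : Fin n) : Fin s → ZMod 2 := fun r => G r h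

def Ncnt (G : Matrix (Fin s) (Fin n) (ZMod 2)) (v : Fin s → ZMod 2) : ℕ :=
  (univ.filter fun h : Fin n => v ⬝ᵥ col G h = 1).card

def mult (G : Matrix (Fin s) (Fin n) (ZMod 2)) (p : Fin s → ZMod 2) : ℕ :=
  (univ.filter fun h : Fin n => col G h = p).card

def suppc (G : Matrix (Fin s) (Fin n) (ZMod 2)) : ℕ :=
  (univ.filter fun h : Fin n => col G h ≠ 0).card

variable (G : Matrix (Fin s) (Fin n) (ZMod 2))

lemma sum_Ncnt (A : Finset (Fin s → ZMod 2)) :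
    ∑ v ∈ A, Ncnt G v = ∑ h : Fin n, (A.filter fun v => v ⬝ᵥ col G h = 1).card := by
  simp only [Ncnt, Finset.card_filter]
  exact Finset.sum_comm

lemma identB (hs : 1 ≤ s) : ∑ v : Fin s → ZMod 2, Ncnt G v = 2 ^ (s - 1) * suppc G := by
  rw [sum_Ncnt G univ]
  have : ∀ h : Fin n, ((univ : Finset (Fin s → ZMod 2)).filter
      fun v => v ⬝ᵥ col G h = 1).card = if col G h ≠ 0 then 2 ^ (s - 1) else 0 := by
    intro h
    by_cases hc : col G h = 0
    · simp [hc]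
    · rw [if_pos hc, card_fiber hs _ hc]
  simp only [this]
  rw [suppc, Finset.card_filter, Finset.mul_sum]
  congr 1
  funext h
  by_cases hc : col G h = 0 <;> simp [hc]

lemma identC (hs : 2 ≤ s) (p : Fin s → ZMod 2) (hp : p ≠ 0) :
    ∑ v ∈ (univ.filter fun v : Fin s → ZMod 2 => v ⬝ᵥ p = 1), Ncnt G v
      = 2 ^ (s - 2) * (suppc G + mult G p) := by
  rw [sum_Ncnt]
  have key : ∀ h : Fin n, (((univ : Finset (Fin s → ZMod 2)).filter fun v => v ⬝ᵥ p = 1).filter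
      fun v => v ⬝ᵥ col G h = 1).card
      = 2 ^ (s - 2) * ((if col G h ≠ 0 then 1 else 0) + (if col G h = p then 1 else 0)) := by
    intro h
    rw [Finset.filter_filter]
    by_cases hc0 : col G h = 0
    · simp [hc0, Ne.symm hp]
    · by_cases hcp : col G h = p
      · have : ((univ : Finset (Fin s → ZMod 2)).filter
            fun v => v ⬝ᵥ p = 1 ∧ v ⬝ᵥ col G h = 1) =
            (univ.filter fun v : Fin s → ZMod 2 => v ⬝ᵥ p = 1) := by
          rw [hcp]
          simp [and_self]
        rw [this, card_fiber (by omega) p hp, if_pos hc0, if_pos hcp]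
        have : 2 ^ (s - 1) = 2 ^ (s - 2) * 2 := by
          rw [← pow_succ]
          congr 1
          omega
        omega
      · rw [card_fiber_pair hs p (col G h) hp hc0 hcp, if_pos hc0, if_neg hcp]
        ring
    
  simp only [key]
  rw [← Finset.mul_sum, Finset.sum_add_distrib]
  congr 2
  · rw [suppc, Finset.card_filter]
  · rw [mult, Finset.card_filter]

lemma dot_sum (v : Fin s → ZMod 2) (S : Finset (Fin n)) :
    v ⬝ᵥ (∑ h ∈ S, col G h) = ∑ h ∈ S, v ⬝ᵥ col G h := by
  simp only [dotProduct, Finset.sum_apply, Finset.mul_sum]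
  exact Finset.sum_comm

lemma single_ne_zero' (i : Fin s) : (Pi.single i 1 : Fin s → ZMod 2) ≠ 0 := by
  intro h
  have := congrFun h i
  simp at this

lemma L1 (hpir : IsPIRMatrix s n k G) (v : Fin s → ZMod 2) (hv : v ≠ 0) : k ≤ Ncnt G v := by
  obtain ⟨i, hi⟩ := exists_coord v hv
  obtain ⟨R, hdisj, hsum⟩ := hpir i
  have hx : ∀ j : Fin k, ∃ h ∈ R j, v ⬝ᵥ col G h = 1 := by
    intro j
    by_contra hcon
    push_neg at hcon
    have hsum' : (∑ h ∈ R j, col G h) = Pi.single i 1 := hsum j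
    have h1 : v ⬝ᵥ (∑ h ∈ R j, col G h) = 1 := by
      rw [hsum', dotProduct_single_one, hi]
    rw [dot_sum] at h1
    have h0 : ∑ h ∈ R j, v ⬝ᵥ col G h = 0 := by
      apply Finset.sum_eq_zero
      intro h hh
      rcases zmod2_em (v ⬝ᵥ col G h) with h' | h'
      · exact h'
      · exact absurd h' (hcon h hh)
    rw [h0] at h1
    exact absurd h1 (by decide)
  choose f hf1 hf2 using hx
  have : (univ : Finset (Fin k)).card ≤ (univ.filter fun h : Fin n => v ⬝ᵥ col G h = 1).card := by
    apply Finset.card_le_card_of_injOn f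
    · intro j _
      simp only [Finset.mem_coe, mem_filter, mem_univ, true_and]
      exact hf2 j
    · intro j _ j' _ hjj
      by_contra hne
      exact (Finset.disjoint_left.mp (hdisj j j' hne) (hf1 j)) (hjj ▸ hf1 j')
  simpa [Ncnt] using this

lemma L2 (hpir : IsPIRMatrix s n k G) (i : Fin s) (w : Fin s → ZMod 2)
    (hw : w ⬝ᵥ Pi.single i 1 = 1) :
    3 * k + Ncnt G w ≤ 2 * mult G (Pi.single i 1) + 2 * suppc G := by
  obtain ⟨R, hdisj, hsum⟩ := hpir i
  set e : Fin s → ZMod 2 := Pi.single i 1 with he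
  classical
  set y : Fin n → ℕ := fun h =>
    if col G h = e then 3 else if w ⬝ᵥ col G h = 1 then 1 else if col G h ≠ 0 then 2 else 0
    with hy
  have hene : e ≠ 0 := single_ne_zero' i
  have hene' : (0 : Fin s → ZMod 2) ≠ e := fun h => hene h.symm
  -- Claim B
  have claimB : (∑ h : Fin n, y h) + Ncnt G w = 2 * mult G e + 2 * suppc G := by
    rw [Ncnt, mult, suppc, Finset.card_filter, Finset.card_filter, Finset.card_filter,
      Finset.mul_sum, Finset.mul_sum, ← Finset.sum_add_distrib, ← Finset.sum_add_distrib]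
    apply Finset.sum_congr rfl
    intro h _
    by_cases h1 : col G h = e
    · have hd : w ⬝ᵥ col G h = 1 := by rw [h1, he, hw]
      have h0 : ¬(col G h = 0) := by rw [h1]; exact single_ne_zero' i
      simp [hy, h1, hd, h0, hw, hene, hene']
    · by_cases h2 : w ⬝ᵥ col G h = 1
      · have h0 : ¬(col G h = 0) := by
          intro hz
          rw [hz, dotProduct_zero] at h2
          exact absurd h2 (by decide)
        simp [hy, h1, h2, h0]
      · by_cases h0 : col G h = 0
        · simp [hy, h1, h2, h0, hene']
        · simp [hy, h1, h2, h0]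
  -- Claim A
  have claimA : ∀ j : Fin k, 3 ≤ ∑ h ∈ R j, y h := by
    intro j
    have hsum' : (∑ h ∈ R j, col G h) = e := hsum j
    by_cases hce : ∃ h ∈ R j, col G h = e
    · obtain ⟨h₀, hmem, hcol⟩ := hce
      calc (3 : ℕ) = y h₀ := by simp [hy, hcol]
        _ ≤ ∑ h ∈ R j, y h := Finset.single_le_sum (fun h _ => Nat.zero_le _) hmem
    · push_neg at hce
      set T : Finset (Fin n) := (R j).filter (fun h => w ⬝ᵥ col G h = 1) with hT
      have hTcast : (T.card : ZMod 2) = 1 := by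
        have h1 : ∑ h ∈ R j, w ⬝ᵥ col G h = 1 := by
          rw [← dot_sum, hsum', he, hw]
        have h2 : ∑ h ∈ R j, w ⬝ᵥ col G h = ∑ h ∈ T, (1 : ZMod 2) := by
          rw [hT, Finset.sum_filter]
          apply Finset.sum_congr rfl
          intro h _
          rcases zmod2_em (w ⬝ᵥ col G h) with h' | h' <;> simp [h']
        rw [h2] at h1
        simpa using h1
      have hodd : T.card % 2 = 1 := by
        rcases Nat.even_or_odd T.card with hev | hod
        · obtain ⟨m, hm⟩ := hev
          rw [hm] at hTcast
          push_cast at hTcast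
          have : (m : ZMod 2) + m = 0 := by
            have : ∀ x : ZMod 2, x + x = 0 := by decide
            exact this m
          rw [this] at hTcast
          exact absurd hTcast (by decide)
        · exact Nat.odd_iff.mp hod
      have hT1 : ∀ h ∈ T, y h = 1 := by
        intro h hh
        rw [hT, Finset.mem_filter] at hh
        simp [hy, hce h hh.1, hh.2]
      by_cases hc1 : T.card = 1
      · obtain ⟨h₀, hh₀⟩ := Finset.card_eq_one.mp hc1
        have h₀T : h₀ ∈ T := by rw [hh₀]; exact Finset.mem_singleton_self h₀
        have h₀T2 := h₀T
        rw [hT, Finset.mem_filter] at h₀T2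
        obtain ⟨h₀R, h₀dot⟩ := h₀T2
        -- find h₁
        have hex : ∃ h₁ ∈ R j, h₁ ≠ h₀ ∧ col G h₁ ≠ 0 := by
          by_contra hcon
          push_neg at hcon
          have hz : ∑ h ∈ (R j).erase h₀, col G h = 0 := by
            apply Finset.sum_eq_zero
            intro h hh
            have hne := Finset.ne_of_mem_erase hh
            have hmem := Finset.mem_of_mem_erase hh
            exact hcon h hmem hne
          have := Finset.add_sum_erase (R j) (fun h => col G h) h₀R
          rw [hz, add_zero] at this
          rw [← this] at hsum'
          exact hce h₀ h₀R hsum'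
        obtain ⟨h₁, h₁R, h₁ne, h₁nz⟩ := hex
        have h₁notT : h₁ ∉ T := by
          intro hh
          rw [hh₀, Finset.mem_singleton] at hh
          exact h₁ne hh
        have h₁dot : ¬(w ⬝ᵥ col G h₁ = 1) := by
          intro hd
          exact h₁notT (by rw [hT, Finset.mem_filter]; exact ⟨h₁R, hd⟩)
        have hy₀ : y h₀ = 1 := hT1 h₀ h₀T
        have hy₁ : y h₁ = 2 := by simp [hy, hce h₁ h₁R, h₁dot, h₁nz]
        have hpair : ∑ h ∈ ({h₀, h₁} : Finset (Fin n)), y h ≤ ∑ h ∈ R j, y h := by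
          apply Finset.sum_le_sum_of_subset_of_nonneg
          · intro x hx
            rcases Finset.mem_insert.mp hx with h | h
            · exact h ▸ h₀R
            · rw [Finset.mem_singleton] at h
              exact h ▸ h₁R
          · intro _ _ _
            exact Nat.zero_le _
        rw [Finset.sum_pair (Ne.symm h₁ne), hy₀, hy₁] at hpair
        omega
      · have hc3 : 3 ≤ T.card := by omega
        calc (3 : ℕ) ≤ T.card := hc3
          _ = ∑ h ∈ T, 1 := by simp
          _ = ∑ h ∈ T, y h := Finset.sum_congr rfl (fun h hh => (hT1 h hh).symm)
          _ ≤ ∑ h ∈ R j, y h := Finset.sum_le_sum_of_subset_of_nonneg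
              (Finset.filter_subset _ _) (fun _ _ _ => Nat.zero_le _)
  -- assemble
  have hdisj' : (↑(univ : Finset (Fin k)) : Set (Fin k)).PairwiseDisjoint R :=
    fun a _ b _ hab => hdisj a b hab
  have hb : ∑ j : Fin k, ∑ h ∈ R j, y h = ∑ h ∈ (univ : Finset (Fin k)).biUnion R, y h :=
    (Finset.sum_biUnion hdisj').symm
  have hle : ∑ h ∈ (univ : Finset (Fin k)).biUnion R, y h ≤ ∑ h : Fin n, y h :=
    Finset.sum_le_sum_of_subset_of_nonneg (Finset.subset_univ _) (fun _ _ _ => Nat.zero_le _)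
  have h3k : 3 * k ≤ ∑ j : Fin k, ∑ h ∈ R j, y h := by
    calc 3 * k = ∑ _j : Fin k, 3 := by simp [Finset.sum_const, mul_comm]
      _ ≤ ∑ j : Fin k, ∑ h ∈ R j, y h := Finset.sum_le_sum (fun j _ => claimA j)
  omega

theorem main (s l n : ℕ) (hs : 4 ≤ s) (G : Matrix (Fin s) (Fin n) (ZMod 2))
    (hpir : IsPIRMatrix s n (2 ^ (s - 2) + l * 2 ^ (s - 1)) G) :
    l * (2 ^ s - 1) + 2 ^ (s - 1) + 1 ≤ n := by
  classical
  by_contra hcon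
  push_neg at hcon
  -- notation
  set kN : ℕ := 2 ^ (s - 2) + l * 2 ^ (s - 1) with hkN
  set KN : ℕ := 2 ^ (s - 2) with hKN
  have hpow1 : 2 ^ (s - 1) = 2 * KN := by
    rw [hKN, ← pow_succ']
    congr 1
    omega
  have hpow2 : 2 ^ s = 4 * KN := by
    rw [hKN]
    have hss : s - 2 + 2 = s := by omega
    nth_rewrite 1 [← hss]
    rw [pow_add]
    ring
  have hK4 : 4 ≤ KN := by
    rw [hKN]
    calc 4 = 2 ^ 2 := by norm_num
      _ ≤ 2 ^ (s - 2) := Nat.pow_le_pow_right (by norm_num) (by omega)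
  -- integer versions
  set K : ℤ := (KN : ℤ) with hKdef
  set k : ℤ := (kN : ℤ) with hkdef
  have hkK : k = K * (2 * l + 1) := by
    rw [hkdef, hkN, hKdef, hpow1]
    push_cast
    ring
  -- n bound : n ≤ 2k - l  over ℤ
  have hn : (n : ℤ) ≤ 2 * k - l := by
    have h1 : n ≤ l * (2 ^ s - 1) + 2 ^ (s - 1) := by omega
    have h2 : ((l * (2 ^ s - 1) + 2 ^ (s - 1) : ℕ) : ℤ) = 2 * k - l := by
      have h3 : (2:ℕ)^s - 1 = 4 * KN - 1 := by rw [hpow2]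
      rw [h3, hpow1]
      have h4 : (1:ℕ) ≤ 4 * KN := by omega
      push_cast [h4]
      rw [hkdef, hkN, hpow1]
      push_cast
      ring
    calc (n:ℤ) ≤ ((l * (2 ^ s - 1) + 2 ^ (s - 1) : ℕ) : ℤ) := by exact_mod_cast h1
      _ = 2 * k - l := h2
  set A : Finset (Fin s → ZMod 2) := univ.filter (fun v => v ≠ 0) with hA
  have hAmem : ∀ v : Fin s → ZMod 2, v ∈ A ↔ v ≠ 0 := by
    intro v
    simp [hA]
  have hcardA : (A.card : ℤ) = 4 * K - 1 := by
    have : A = (univ : Finset (Fin s → ZMod 2)).erase 0 := by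
      rw [hA]
      ext v
      simp [Finset.mem_erase, and_comm]
    rw [this, Finset.card_erase_of_mem (Finset.mem_univ _)]
    have hcard : (univ : Finset (Fin s → ZMod 2)).card = 2 ^ s := by simp
    rw [hcard, hpow2, hKdef]
    have : (1:ℕ) ≤ 4 * KN := by omega
    push_cast [this]
    ring
  have hL1 : ∀ v ∈ A, (k : ℤ) ≤ (Ncnt G v : ℤ) := by
    intro v hv
    rw [hkdef]
    exact_mod_cast L1 G hpir v ((hAmem v).mp hv)
  have hslack_nonneg : ∀ v ∈ A, (0:ℤ) ≤ (Ncnt G v : ℤ) - k := fun v hv => by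
    have := hL1 v hv
    omega
  -- suppc bound
  have hSp_le : (suppc G : ℤ) ≤ (n : ℤ) := by
    have : suppc G ≤ n := by
      calc suppc G ≤ (univ : Finset (Fin n)).card := Finset.card_filter_le _ _
        _ = n := by simp
    exact_mod_cast this
  -- sum over A
  have hNcnt0 : Ncnt G 0 = 0 := by
    rw [Ncnt]
    convert Finset.card_empty
    rw [Finset.eq_empty_iff_forall_notMem]
    intro h hh
    rw [Finset.mem_filter] at hh
    have := hh.2
    rw [zero_dotProduct] at this
    exact absurd this (by decide)
  have hsumA : ∑ v ∈ A, ((Ncnt G v : ℤ) - k) = 2 * K * (suppc G : ℤ) - (4 * K - 1) * k := by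
    have h1 : ∑ v ∈ A, (Ncnt G v : ℤ) = 2 * K * (suppc G : ℤ) := by
      have h2 : A = (univ : Finset (Fin s → ZMod 2)).erase 0 := by
        rw [hA]; ext v; simp [Finset.mem_erase, and_comm]
      have h3 : ∑ v ∈ A, (Ncnt G v : ℤ) = ∑ v : Fin s → ZMod 2, (Ncnt G v : ℤ) := by
        rw [h2]
        apply Finset.sum_erase
        rw [hNcnt0]
        norm_num
      rw [h3]
      have h4 := identB G (by omega : 1 ≤ s)
      have h5 : ∑ v : Fin s → ZMod 2, (Ncnt G v : ℤ) = (2:ℤ) ^ (s-1) * (suppc G : ℤ) := by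
        exact_mod_cast h4
      have h6 : ((2:ℤ)) ^ (s-1) = 2 * K := by
        rw [hKdef]
        exact_mod_cast hpow1
      rw [h5, h6]
    rw [Finset.sum_sub_distrib, h1, Finset.sum_const, nsmul_eq_mul, hcardA]
  -- suppc = 2k - l
  have hKpos : (0:ℤ) < K := by
    rw [hKdef]
    exact_mod_cast (by omega : 0 < KN)
  have hSp : (suppc G : ℤ) = 2 * k - l := by
    have hge : (0:ℤ) ≤ ∑ v ∈ A, ((Ncnt G v : ℤ) - k) := Finset.sum_nonneg hslack_nonneg
    rw [hsumA] at hge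
    have hle' : (suppc G : ℤ) ≤ 2 * k - l := le_trans hSp_le hn
    by_contra hne
    have hlt : (suppc G : ℤ) ≤ 2 * k - l - 1 := by omega
    have hmul : 2 * K * (suppc G : ℤ) ≤ 2 * K * (2 * k - l - 1) := by
      apply mul_le_mul_of_nonneg_left hlt
      linarith
    have hid : 2 * K * (2 * k - (l:ℤ) - 1) - (4 * K - 1) * k = -K := by
      rw [hkK]
      ring
    linarith
  have htotal : ∑ v ∈ A, ((Ncnt G v : ℤ) - k) = K := by
    rw [hsumA, hSp, hkK]
    ring
  -- exists v0 with positive slack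
  have hex : ∃ v₀ ∈ A, (k:ℤ) < Ncnt G v₀ := by
    by_contra hcon2
    push_neg at hcon2
    have : ∑ v ∈ A, ((Ncnt G v : ℤ) - k) ≤ 0 := by
      apply Finset.sum_nonpos
      intro v hv
      have := hcon2 v hv
      omega
    omega
  obtain ⟨v₀, hv₀A, hv₀⟩ := hex
  have hv₀ne : v₀ ≠ 0 := (hAmem v₀).mp hv₀A
  -- key step : for p ≠ 0 with v₀ ⬝ᵥ p = 1 :
  --   mult G p = l + 1  and all slack concentrated on B p
  have key : ∀ p : Fin s → ZMod 2, p ≠ 0 → v₀ ⬝ᵥ p = 1 →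
      ((mult G p : ℤ) = l + 1 ∧
        ∀ v ∈ A, ¬(v ⬝ᵥ p = 1) → (Ncnt G v : ℤ) = k) := by
    intro p hp hdot
    set B : Finset (Fin s → ZMod 2) := univ.filter (fun v => v ⬝ᵥ p = 1) with hB
    have hBsubA : B ⊆ A := by
      intro v hv
      rw [hB, Finset.mem_filter] at hv
      rw [hAmem]
      intro hz
      rw [hz, zero_dotProduct] at hv
      exact absurd hv.2 (by decide)
    have hv₀B : v₀ ∈ B := by
      rw [hB, Finset.mem_filter]
      exact ⟨Finset.mem_univ _, hdot⟩
    have hsumB : ∑ v ∈ B, ((Ncnt G v : ℤ) - k) = K * ((mult G p : ℤ) - l) := by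
      have h1 := identC G (by omega : 2 ≤ s) p hp
      have h2 : ∑ v ∈ B, (Ncnt G v : ℤ) = K * ((suppc G : ℤ) + (mult G p : ℤ)) := by
        have h2' : ∑ v ∈ B, (Ncnt G v : ℤ) = ((2:ℤ)) ^ (s-2) * ((suppc G : ℤ) + (mult G p : ℤ)) := by
          rw [hB]
          exact_mod_cast h1
        have hKz : K = (2:ℤ) ^ (s - 2) := by
          rw [hKdef, hKN]
          push_cast
          ring
        rw [h2', ← hKz]
      have hcardB : (B.card : ℤ) = 2 * K := by
        have hcb : B.card = 2 ^ (s-1) := by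
          rw [hB]
          exact card_fiber (by omega) p hp
        rw [hcb]
        have : ((2:ℤ)) ^ (s-1) = 2 * K := by
          rw [hKdef]
          exact_mod_cast hpow1
        exact_mod_cast this
      rw [Finset.sum_sub_distrib, h2, Finset.sum_const, nsmul_eq_mul, hcardB, hSp]
      ring
    have hses : (0:ℤ) < ∑ v ∈ B, ((Ncnt G v : ℤ) - k) := by
      have h1 : (Ncnt G v₀ : ℤ) - k ≤ ∑ v ∈ B, ((Ncnt G v : ℤ) - k) :=
        Finset.single_le_sum (fun v hv => hslack_nonneg v (hBsubA hv)) hv₀B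
      omega
    have hsle : ∑ v ∈ B, ((Ncnt G v : ℤ) - k) ≤ K := by
      rw [← htotal]
      exact Finset.sum_le_sum_of_subset_of_nonneg hBsubA (fun v hv _ => hslack_nonneg v hv)
    have hm1 : (mult G p : ℤ) = l + 1 := by
      rw [hsumB] at hses hsle
      set m : ℤ := (mult G p : ℤ) - l with hmdef
      have hm_pos : 0 < m := by
        by_contra hmp
        push_neg at hmp
        have : K * m ≤ 0 := mul_nonpos_iff.mpr (Or.inl ⟨le_of_lt hKpos, hmp⟩)
        linarith
      have hm_le1 : m ≤ 1 := by
        by_contra hmg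
        push_neg at hmg
        have h2m : 2 ≤ m := by omega
        have : K * 2 ≤ K * m := mul_le_mul_of_nonneg_left h2m (le_of_lt hKpos)
        linarith
      have : m = 1 := by omega
      rw [hmdef] at this
      omega
    refine ⟨hm1, ?_⟩
    have hBfull : ∑ v ∈ B, ((Ncnt G v : ℤ) - k) = K := by
      rw [hsumB, hm1]
      ring
    have hrest : ∑ v ∈ A \ B, ((Ncnt G v : ℤ) - k) = 0 := by
      have hsp := Finset.sum_sdiff (f := fun v => ((Ncnt G v : ℤ) - k)) hBsubA
      beta_reduce at hsp
      rw [hBfull, htotal] at hsp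
      omega
    intro v hvA hvnB
    have hvmem : v ∈ A \ B := by
      rw [Finset.mem_sdiff]
      refine ⟨hvA, ?_⟩
      rw [hB, Finset.mem_filter]
      tauto
    have := (Finset.sum_eq_zero_iff_of_nonneg
      (fun v hv => hslack_nonneg v (Finset.mem_sdiff.mp hv).1)).mp hrest v hvmem
    omega
  -- all other slacks vanish
  have hothers : ∀ v ∈ A, v ≠ v₀ → (Ncnt G v : ℤ) = k := by
    intro v hvA hvne
    obtain ⟨e, he₀, he₁⟩ := exists_dot_one_zero v₀ v hv₀ne hvne
    have hene : e ≠ 0 := by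
      intro hz
      rw [hz, zero_dotProduct] at he₀
      exact absurd he₀ (by decide)
    have hd₀ : v₀ ⬝ᵥ e = 1 := by rw [dotProduct_comm]; exact he₀
    refine (key e hene hd₀).2 v hvA ?_
    rw [dotProduct_comm]
    rw [he₁]
    decide
  -- slack of v₀ equals K
  have hv₀K : (Ncnt G v₀ : ℤ) = k + K := by
    have hsing := Finset.sum_eq_single_of_mem v₀ hv₀A
      (f := fun v => ((Ncnt G v : ℤ) - k))
      (fun v hv hne => by beta_reduce; rw [hothers v hv hne]; ring)
    beta_reduce at hsing
    rw [hsing] at htotal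
    omega
  -- pick coordinate i
  obtain ⟨i, hi⟩ := exists_coord v₀ hv₀ne
  have hdi : v₀ ⬝ᵥ (Pi.single i 1 : Fin s → ZMod 2) = 1 := by
    rw [dotProduct_single_one, hi]
  have hmi : (mult G (Pi.single i 1) : ℤ) = l + 1 :=
    (key (Pi.single i 1) (single_ne_zero' i) hdi).1
  -- final contradiction via L2
  have hL2 := L2 G hpir i v₀ hdi
  have hL2' : 3 * k + (Ncnt G v₀ : ℤ) ≤ 2 * (mult G (Pi.single i 1) : ℤ) + 2 * (suppc G : ℤ) := by
    rw [hkdef]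
    exact_mod_cast hL2
  rw [hv₀K, hmi, hSp] at hL2'
  have : K ≤ 2 := by omega
  have : (4:ℤ) ≤ K := by rw [hKdef]; exact_mod_cast hK4
  omega

lemma exists_pir (s k : ℕ) (hs : 0 < s) (hk : 0 < k) :
    {n : ℕ | 0 < n ∧ ∃ G : Matrix (Fin s) (Fin n) (ZMod 2), IsPIRMatrix s n k G}.Nonempty := by
  classical
  refine ⟨s * k, Nat.mul_pos hs hk, ?_⟩
  refine ⟨fun r h => if ((finProdFinEquiv.symm h).1 = r) then 1 else 0, ?_⟩
  intro i
  refine ⟨fun j => {finProdFinEquiv (i, j)}, ?_, ?_⟩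
  · intro j j' hjj
    rw [Finset.disjoint_singleton]
    intro hEq
    apply hjj
    have := finProdFinEquiv.injective hEq
    exact (Prod.mk.injEq _ _ _ _ ▸ this).2
  · intro j
    rw [Finset.sum_singleton]
    funext r
    simp only [Equiv.symm_apply_apply, Pi.single_apply]
    by_cases hir : i = r
    · subst hir
      simp
    · rw [if_neg hir, if_neg (fun h => hir h.symm)]

end PIR13


/-- For every `s ≥ 4` and `ℓ ≥ 0`:
`P(s, 2^{s-2} + ℓ·2^{s-1}) ≥ ℓ(2^s - 1) + 2^{s-1} + 1`. -/
theorem stmt_13 (s l : ℕ) (hs : 4 ≤ s) :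
    l * (2 ^ s - 1) + 2 ^ (s - 1) + 1 ≤
      PIRlen s (2 ^ (s - 2) + l * 2 ^ (s - 1)) := by
  have hne := PIR13.exists_pir s (2 ^ (s - 2) + l * 2 ^ (s - 1)) (by omega) (by positivity)
  have hmem := Nat.sInf_mem hne
  obtain ⟨hpos, G, hG⟩ := hmem
  exact PIR13.main s l _ hs G hG
end

section
/- Let s ≥ 2, n, d, m be positive integers and let G be an s-by-n matrix over F_2 of rank s such that every nonzero F_2-linear combination of the rows of G has Hamming weight at least d. If some nonzero vector p ∈ F_2^s occurs at least m times as a column of G, then 2^{s-2}·n ≥ (2^{s-1} − 1)·d + 2^{s-2}·m (equivalently, n ≥ ((2^{s-1} − 1)/2^{s-2})·d + m). -/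
open Finset Matrix

lemma zmod2_ne_zero' (x : ZMod 2) (h : x ≠ 0) : x = 1 := by revert h; revert x; decide

lemma add2_self (x y : ZMod 2) : x + y + y = x := by revert x y; decide

lemma card_ker' {s : ℕ} (p : Fin s → ZMod 2) (hp : p ≠ 0) :
    (Finset.univ.filter fun c : Fin s → ZMod 2 => c ⬝ᵥ p = 0).card = 2 ^ (s - 1) := by
  obtain ⟨i, hi⟩ : ∃ i, p i ≠ 0 := by
    by_contra h; push_neg at h; exact hp (funext h)
  have hpi : p i = 1 := zmod2_ne_zero' _ hi
  have key : ∀ c : Fin s → ZMod 2, (c + Pi.single i 1) ⬝ᵥ p = c ⬝ᵥ p + 1 := by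
    intro c
    rw [add_dotProduct, single_dotProduct, hpi, mul_one]
  have hinv : ∀ c : Fin s → ZMod 2, c + Pi.single i 1 + Pi.single i 1 = c := by
    intro c; ext k; simp [add2_self]
  have hbij : (Finset.univ.filter fun c : Fin s → ZMod 2 => c ⬝ᵥ p = 0).card =
      (Finset.univ.filter fun c : Fin s → ZMod 2 => c ⬝ᵥ p = 1).card := by
    apply Finset.card_bij' (fun c _ => c + Pi.single i 1) (fun c _ => c + Pi.single i 1)
    · intro c _; exact hinv c
    · intro c _; exact hinv c
    · intro c hc
      simp only [mem_filter, mem_univ, true_and] at hc ⊢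
      rw [key, hc, zero_add]
    · intro c hc
      simp only [mem_filter, mem_univ, true_and] at hc ⊢
      rw [key, hc]; decide
  have hsplit : (Finset.univ.filter fun c : Fin s → ZMod 2 => c ⬝ᵥ p = 0).card +
      (Finset.univ.filter fun c : Fin s → ZMod 2 => c ⬝ᵥ p = 1).card = 2 ^ s := by
    have h1 : (Finset.univ.filter fun c : Fin s → ZMod 2 => c ⬝ᵥ p = 1) =
        (Finset.univ.filter fun c : Fin s → ZMod 2 => ¬ (c ⬝ᵥ p = 0)) := by
      apply Finset.filter_congr; intro c _
      constructor
      · intro h h0; rw [h0] at h; exact one_ne_zero h.symm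
      · intro h; exact zmod2_ne_zero' _ h
    rw [h1, Finset.card_filter_add_card_filter_not]
    simp [Fintype.card_fun]
  have hs1 : 1 ≤ s := by
    rcases Nat.eq_zero_or_pos s with h | h
    · subst h; exact absurd (Subsingleton.elim p 0) hp
    · exact h
  have : 2 ^ s = 2 ^ (s - 1) * 2 := by
    rw [← pow_succ]; congr 1; omega
  omega

lemma card_half' {s : ℕ} (hs : 2 ≤ s) (p q : Fin s → ZMod 2) (hp : p ≠ 0) :
    (Finset.univ.filter fun c : Fin s → ZMod 2 => c ⬝ᵥ p = 0 ∧ c ⬝ᵥ q = 1).card ≤ 2 ^ (s - 2) := by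
  classical
  set A := Finset.univ.filter fun c : Fin s → ZMod 2 => c ⬝ᵥ p = 0 ∧ c ⬝ᵥ q = 1 with hA
  rcases A.eq_empty_or_nonempty with h | ⟨c₀, hc₀⟩
  · simp [h]
  · simp only [hA, mem_filter, mem_univ, true_and] at hc₀
    set A' := Finset.univ.filter fun c : Fin s → ZMod 2 => c ⬝ᵥ p = 0 ∧ ¬ (c ⬝ᵥ q = 1) with hA'
    have hle : A.card ≤ A'.card := by
      apply Finset.card_le_card_of_injOn (fun c => c + c₀)
      · intro c hc
        simp only [hA, Finset.mem_coe, mem_filter, mem_univ, true_and] at hc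
        simp only [hA', Finset.mem_coe, mem_filter, mem_univ, true_and]
        refine ⟨by rw [add_dotProduct, hc.1, hc₀.1, add_zero], ?_⟩
        rw [add_dotProduct, hc.2, hc₀.2]; decide
      · intro a _ b _ h
        exact add_right_cancel h
    have hsum : A.card + A'.card = 2 ^ (s - 1) := by
      rw [← card_ker' p hp]
      have hpart := Finset.card_filter_add_card_filter_not
        (s := Finset.univ.filter fun c : Fin s → ZMod 2 => c ⬝ᵥ p = 0)
        (p := fun c => c ⬝ᵥ q = 1)
      rw [Finset.filter_filter, Finset.filter_filter] at hpart
      rw [hA, hA']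
      exact hpart
    have hpow : 2 ^ (s - 1) = 2 ^ (s - 2) * 2 := by
      rw [← pow_succ]; congr 1; omega
    omega


/-- If an `[n,s]` code of minimum distance at least `d` has a column of
multiplicity at least `m`, then `2^{s-2}·n ≥ (2^{s-1} - 1)·d + 2^{s-2}·m`. -/
theorem stmt_16 (s n d m : ℕ) (hs : 2 ≤ s) (hn : 0 < n) (hd : 0 < d) (hm : 0 < m)
    (G : Matrix (Fin s) (Fin n) (ZMod 2)) (hrank : G.rank = s)
    (hdist : ∀ c : Fin s → ZMod 2, c ≠ 0 →
      d ≤ (Finset.univ.filter fun j : Fin n => Matrix.vecMul c G j ≠ 0).card)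
    (p : Fin s → ZMod 2) (hp : p ≠ 0)
    (hmult : m ≤ (Finset.univ.filter fun j : Fin n =>
      (fun r : Fin s => G r j) = p).card) :
    (2 ^ (s - 1) - 1) * d + 2 ^ (s - 2) * m ≤ 2 ^ (s - 2) * n := by
  classical
  set S : Finset (Fin s → ZMod 2) :=
    Finset.univ.filter fun c => c ⬝ᵥ p = 0 ∧ c ≠ 0 with hS
  -- cardinality of S
  have hScard : S.card = 2 ^ (s - 1) - 1 := by
    have h0 : (0 : Fin s → ZMod 2) ∈ Finset.univ.filter
        (fun c : Fin s → ZMod 2 => c ⬝ᵥ p = 0) := by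
      simp
    have : S = (Finset.univ.filter fun c : Fin s → ZMod 2 => c ⬝ᵥ p = 0).erase 0 := by
      ext c
      simp only [hS, mem_filter, mem_univ, true_and, Finset.mem_erase]
      tauto
    rw [this, Finset.card_erase_of_mem h0, card_ker' p hp]
  -- double counting
  set T : ℕ := ∑ c ∈ S, (Finset.univ.filter fun j : Fin n => Matrix.vecMul c G j ≠ 0).card with hT
  have hlow : (2 ^ (s - 1) - 1) * d ≤ T := by
    rw [← hScard]
    calc S.card * d = ∑ _c ∈ S, d := by rw [Finset.sum_const, smul_eq_mul]
    _ ≤ T := by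
        apply Finset.sum_le_sum
        intro c hc
        simp only [hS, mem_filter, mem_univ, true_and] at hc
        exact hdist c hc.2
  have hswap : T = ∑ j : Fin n, (S.filter fun c => Matrix.vecMul c G j ≠ 0).card := by
    rw [hT]
    simp only [Finset.card_filter]
    rw [Finset.sum_comm]
  set P : Finset (Fin n) := Finset.univ.filter fun j => (fun r : Fin s => G r j) = p with hPdef
  have hhigh : T ≤ (n - P.card) * 2 ^ (s - 2) := by
    rw [hswap]
    calc ∑ j : Fin n, (S.filter fun c => Matrix.vecMul c G j ≠ 0).card
        ≤ ∑ j : Fin n, if (fun r : Fin s => G r j) = p then 0 else 2 ^ (s - 2) := by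
          apply Finset.sum_le_sum
          intro j _
          by_cases hj : (fun r : Fin s => G r j) = p
          · rw [if_pos hj]
            have : S.filter (fun c => Matrix.vecMul c G j ≠ 0) = ∅ := by
              apply Finset.filter_false_of_mem
              intro c hc
              simp only [hS, mem_filter, mem_univ, true_and] at hc
              intro hne
              apply hne
              show c ⬝ᵥ (fun i => G i j) = 0
              rw [show (fun i => G i j) = p from hj, hc.1]
            simp [this]
          · rw [if_neg hj]
            refine le_trans (Finset.card_le_card ?_) (card_half' hs p (fun i => G i j) hp)
            intro c hc
            simp only [hS, mem_filter, mem_univ, true_and] at hc ⊢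
            refine ⟨hc.1.1, ?_⟩
            exact zmod2_ne_zero' _ hc.2
      _ = (n - P.card) * 2 ^ (s - 2) := by
          rw [Finset.sum_ite, Finset.sum_const, Finset.sum_const, smul_eq_mul, smul_eq_mul,
            mul_zero, zero_add]
          congr 1
          have := Finset.card_filter_add_card_filter_not
            (s := (Finset.univ : Finset (Fin n)))
            (p := fun j => (fun r : Fin s => G r j) = p)
          simp only [Finset.card_univ, Fintype.card_fin] at this
          rw [hPdef]
          omega
  have hPn : P.card ≤ n := by
    rw [hPdef]
    refine le_trans (Finset.card_le_card (Finset.filter_subset _ _)) ?_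
    simp
  have hmP : m ≤ P.card := hmult
  calc (2 ^ (s - 1) - 1) * d + 2 ^ (s - 2) * m
      ≤ (n - P.card) * 2 ^ (s - 2) + 2 ^ (s - 2) * P.card := by
        exact Nat.add_le_add (le_trans hlow hhigh) (Nat.mul_le_mul_left _ hmP)
    _ ≤ 2 ^ (s - 2) * n := by
        rw [mul_comm (n - P.card), ← Nat.mul_add]
        exact Nat.mul_le_mul_left _ (by omega)
end

section
/- One has P(4,2) = 5, P(4,4) = 9, P(4,6) = 12, P(4,8) = 15, and for every even integer k > 8, P(4,k) = P(4, k − 8τ) + 15τ, where τ = ⌊(k−1)/8⌋. -/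
/-! ### Explicit constructions -/

def Gtwo : Matrix (Fin 4) (Fin 5) (ZMod 2) :=
  !![1, 0, 0, 0, 1; 0, 1, 0, 0, 1; 0, 0, 1, 0, 1; 0, 0, 0, 1, 1]

def Rtwo : Fin 4 → Fin 2 → Finset (Fin 5) :=
  ![![{0}, {1, 2, 3, 4}],
   ![{1}, {0, 2, 3, 4}],
   ![{2}, {0, 1, 3, 4}],
   ![{3}, {0, 1, 2, 4}]]

lemma isPIR_two : IsPIRMatrix 4 5 2 Gtwo := by
  intro i
  refine ⟨Rtwo i, ?_, ?_⟩ <;> fin_cases i <;> decide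

def Gfour : Matrix (Fin 4) (Fin 9) (ZMod 2) :=
  !![0, 0, 1, 1, 0, 1, 1, 1, 1; 1, 0, 1, 0, 1, 1, 1, 0, 1; 0, 0, 1, 1, 1, 0, 0, 0, 1; 1, 1, 1, 0, 1, 0, 0, 0, 0]

def Rfour : Fin 4 → Fin 4 → Finset (Fin 9) :=
  ![![{7}, {2, 4}, {0, 1, 5}, {3, 6, 8}],
   ![{0, 1}, {3, 8}, {5, 7}, {2, 4, 6}],
   ![{0, 4}, {3, 7}, {5, 8}, {1, 2, 6}],
   ![{1}, {2, 8}, {0, 5, 7}, {3, 4, 6}]]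

lemma isPIR_four : IsPIRMatrix 4 9 4 Gfour := by
  intro i
  refine ⟨Rfour i, ?_, ?_⟩ <;> fin_cases i <;> decide

def Gsix : Matrix (Fin 4) (Fin 12) (ZMod 2) :=
  !![1, 1, 0, 0, 1, 0, 0, 1, 0, 0, 1, 1; 0, 1, 1, 1, 1, 0, 0, 0, 1, 0, 0, 1; 1, 1, 1, 1, 0, 0, 1, 0, 0, 1, 1, 1; 1, 0, 1, 0, 0, 1, 0, 0, 1, 1, 0, 1]

def Rsix : Fin 4 → Fin 6 → Finset (Fin 12) :=
  ![![{7}, {0, 9}, {1, 3}, {2, 11}, {6, 10}, {4, 5, 8}],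
   ![{0, 11}, {1, 10}, {2, 9}, {3, 6}, {4, 7}, {5, 8}],
   ![{6}, {1, 4}, {2, 8}, {5, 9}, {7, 10}, {0, 3, 11}],
   ![{5}, {0, 10}, {1, 11}, {2, 3}, {6, 9}, {4, 7, 8}]]

lemma isPIR_six : IsPIRMatrix 4 12 6 Gsix := by
  intro i
  refine ⟨Rsix i, ?_, ?_⟩ <;> fin_cases i <;> decide

def Geight : Matrix (Fin 4) (Fin 15) (ZMod 2) :=
  !![1, 0, 1, 0, 1, 0, 1, 0, 1, 0, 1, 0, 1, 0, 1; 0, 1, 1, 0, 0, 1, 1, 0, 0, 1, 1, 0, 0, 1, 1; 0, 0, 0, 1, 1, 1, 1, 0, 0, 0, 0, 1, 1, 1, 1; 0, 0, 0, 0, 0, 0, 0, 1, 1, 1, 1, 1, 1, 1, 1]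

def Reight : Fin 4 → Fin 8 → Finset (Fin 15) :=
  ![![{0}, {1, 2}, {3, 4}, {5, 6}, {7, 8}, {9, 10}, {11, 12}, {13, 14}],
   ![{1}, {0, 2}, {3, 5}, {4, 6}, {7, 9}, {8, 10}, {11, 13}, {12, 14}],
   ![{3}, {0, 4}, {1, 5}, {2, 6}, {7, 11}, {8, 12}, {9, 13}, {10, 14}],
   ![{7}, {0, 8}, {1, 9}, {2, 10}, {3, 11}, {4, 12}, {5, 13}, {6, 14}]]

lemma isPIR_eight : IsPIRMatrix 4 15 8 Geight := by
  intro i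
  refine ⟨Reight i, ?_, ?_⟩ <;> fin_cases i <;> decide

/-! ### Concatenation -/

lemma isPIR_concat {s n₁ n₂ k₁ k₂ : ℕ} {G₁ : Matrix (Fin s) (Fin n₁) (ZMod 2)}
    {G₂ : Matrix (Fin s) (Fin n₂) (ZMod 2)}
    (h₁ : IsPIRMatrix s n₁ k₁ G₁) (h₂ : IsPIRMatrix s n₂ k₂ G₂) :
    IsPIRMatrix s (n₁ + n₂) (k₁ + k₂)
      (Matrix.of fun r j => Fin.addCases (G₁ r) (G₂ r) j) := by
  intro i
  obtain ⟨R₁, hd₁, hs₁⟩ := h₁ i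
  obtain ⟨R₂, hd₂, hs₂⟩ := h₂ i
  set e₁ : Fin n₁ ↪ Fin (n₁ + n₂) := ⟨Fin.castAdd n₂, Fin.castAdd_injective _ _⟩ with he₁
  set e₂ : Fin n₂ ↪ Fin (n₁ + n₂) := ⟨Fin.natAdd n₁, (Fin.natAddEmb n₁).injective⟩ with he₂
  refine ⟨fun j => Fin.addCases (fun j₁ => (R₁ j₁).map e₁) (fun j₂ => (R₂ j₂).map e₂) j,
    ?_, ?_⟩
  · have cross : ∀ (S : Finset (Fin n₁)) (T : Finset (Fin n₂)),
        Disjoint (S.map e₁) (T.map e₂) := by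
      intro S T
      rw [Finset.disjoint_left]
      rintro x hx hy
      simp only [Finset.mem_map, he₁, he₂, Function.Embedding.coeFn_mk] at hx hy
      obtain ⟨a, _, rfl⟩ := hx
      obtain ⟨b, _, hab⟩ := hy
      have := congrArg Fin.val hab
      change ((Fin.natAdd n₁ b : Fin (n₁ + n₂)) : ℕ) = (Fin.castAdd n₂ a : ℕ) at this
      simp only [Fin.coe_natAdd, Fin.coe_castAdd] at this
      omega
    intro j j'
    refine Fin.addCases (fun j₁ => ?_) (fun j₂ => ?_) j <;>
      refine Fin.addCases (fun j₁' => ?_) (fun j₂' => ?_) j' <;>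
        intro hne <;> simp only [Fin.addCases_left, Fin.addCases_right]
    · exact Finset.disjoint_map _ |>.2 (hd₁ _ _ (fun h => hne (by rw [h])))
    · exact cross _ _
    · exact (cross _ _).symm
    · exact Finset.disjoint_map _ |>.2 (hd₂ _ _ (fun h => hne (by rw [h])))
  · intro j
    refine Fin.addCases (fun j₁ => ?_) (fun j₂ => ?_) j
    · simp only [Fin.addCases_left, Finset.sum_map]
      have key : ∀ h ∈ R₁ j₁, (fun r : Fin s =>
          (Matrix.of fun r' j' => Fin.addCases (G₁ r') (G₂ r') j') r (e₁ h))
          = fun r : Fin s => G₁ r h := by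
        intro h _
        funext r
        simp only [Matrix.of_apply, he₁, Function.Embedding.coeFn_mk, Fin.addCases_left]
      rw [Finset.sum_congr rfl key]
      exact hs₁ j₁
    · simp only [Fin.addCases_right, Finset.sum_map]
      have key : ∀ h ∈ R₂ j₂, (fun r : Fin s =>
          (Matrix.of fun r' j' => Fin.addCases (G₁ r') (G₂ r') j') r (e₂ h))
          = fun r : Fin s => G₂ r h := by
        intro h _
        funext r
        simp only [Matrix.of_apply, he₂, Function.Embedding.coeFn_mk, Fin.addCases_right]
        exact Fin.addCases_right _
      rw [Finset.sum_congr rfl key]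
      exact hs₂ j₂

/-! ### Basic properties of `PIRlen` -/

lemma pirlen_le {s k n : ℕ} (hn : 0 < n)
    (h : ∃ G : Matrix (Fin s) (Fin n) (ZMod 2), IsPIRMatrix s n k G) :
    PIRlen s k ≤ n := Nat.sInf_le ⟨hn, h⟩

def ExPIR (k : ℕ) : Prop :=
  ∃ n, 0 < n ∧ ∃ G : Matrix (Fin 4) (Fin n) (ZMod 2), IsPIRMatrix 4 n k G

lemma pirlen_spec {k : ℕ} (h : ExPIR k) :
    0 < PIRlen 4 k ∧
      ∃ G : Matrix (Fin 4) (Fin (PIRlen 4 k)) (ZMod 2), IsPIRMatrix 4 (PIRlen 4 k) k G := by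
  have := Nat.sInf_mem (s := {n : ℕ | 0 < n ∧ ∃ G : Matrix (Fin 4) (Fin n) (ZMod 2),
    IsPIRMatrix 4 n k G}) (by obtain ⟨n, hn⟩ := h; exact ⟨n, hn⟩)
  exact this

lemma ub_step {k : ℕ} (hk : ExPIR k) :
    ExPIR (k + 8) ∧ PIRlen 4 (k + 8) ≤ PIRlen 4 k + 15 := by
  obtain ⟨hpos, G, hG⟩ := pirlen_spec hk
  have h8 := isPIR_concat hG isPIR_eight
  exact ⟨⟨PIRlen 4 k + 15, by omega, _, h8⟩, pirlen_le (by omega) ⟨_, h8⟩⟩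

lemma ub_iter {r : ℕ} (hr : ExPIR r) (τ : ℕ) :
    ExPIR (r + 8 * τ) ∧ PIRlen 4 (r + 8 * τ) ≤ PIRlen 4 r + 15 * τ := by
  induction τ with
  | zero => simpa using hr
  | succ t ih =>
    have e : r + 8 * (t + 1) = (r + 8 * t) + 8 := by ring
    rw [e]
    obtain ⟨h1, h2⟩ := ub_step ih.1
    exact ⟨h1, by omega⟩

lemma exPIR_two : ExPIR 2 := ⟨5, by omega, Gtwo, isPIR_two⟩
lemma exPIR_four : ExPIR 4 := ⟨9, by omega, Gfour, isPIR_four⟩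
lemma exPIR_six : ExPIR 6 := ⟨12, by omega, Gsix, isPIR_six⟩
lemma exPIR_eight : ExPIR 8 := ⟨15, by omega, Geight, isPIR_eight⟩

/-! ### Lower bounds -/

abbrev V4 := Fin 4 → ZMod 2

def Dset {n : ℕ} (G : Matrix (Fin 4) (Fin n) (ZMod 2)) (u : V4) : Finset (Fin n) :=
  Finset.univ.filter fun h => (∑ r, u r * G r h) = 1

lemma zmod2_cases (x : ZMod 2) : x = 0 ∨ x = 1 := by revert x; decide

-- decidable facts about F_2^4
lemma D1 : ∀ i : Fin 4, (Finset.univ.filter fun u : V4 => u i = 1).card = 8 := by decide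
lemma D2 : (Finset.univ.filter fun u : V4 => u ≠ 0).card = 15 := by decide
lemma D3 : ∀ c : V4, ((Finset.univ.filter fun u : V4 => u ≠ 0).filter
    fun u => (∑ r, u r * c r) = 1).card = if c = 0 then 0 else 8 := by decide
lemma D4 : ∀ (i : Fin 4) (c : V4), c ≠ 0 →
    ((Finset.univ.filter fun u : V4 => u i = 1).filter fun u => (∑ r, u r * c r) = 1).card
      = if c = Pi.single i 1 then 8 else 4 := by decide
lemma D4' : ∀ (i : Fin 4) (c : V4),
    ((Finset.univ.filter fun u : V4 => u i = 1).filter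
      fun u => (∑ r, u r * c r) = 1).card % 4 = 0 := by decide
lemma D5 : ∀ (i : Fin 4) (u0 c : V4), c ≠ 0 →
    ¬ (∀ u : V4, u i = 1 → u ≠ u0 → (∑ r, u r * c r) = 0) := by decide
lemma D6 : ∀ (i : Fin 4) (u : V4), u i = 1 → u ≠ 0 := by decide
lemma D7 : ∀ (i : Fin 4) (u0 : V4), u0 i = 1 →
    ((Finset.univ.filter fun u : V4 => u i = 1).erase u0).card = 7 := by decide
lemma D8 : ∀ (i : Fin 4),
    ((Finset.univ.filter fun u : V4 => u ≠ 0) \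
      (Finset.univ.filter fun u : V4 => u i = 1)).card = 7 := by decide
lemma D9 : ∀ u0 : V4, u0 ≠ 0 → ∃ i, u0 i = 1 := by decide

-- generic double counting
lemma sum_card_filter_comm {α β : Type*} (A : Finset α) (B : Finset β)
    (p : α → β → Prop) [∀ a b, Decidable (p a b)] :
    ∑ a ∈ A, (B.filter (fun b => p a b)).card
      = ∑ b ∈ B, (A.filter (fun a => p a b)).card := by
  simp only [Finset.card_filter]
  exact Finset.sum_comm

-- sum of values each ≥ k over a finset, total = card * k, forces all equal
lemma all_eq_of_sum {α : Type*} [DecidableEq α] (S : Finset α) (d : α → ℕ) (k : ℕ)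
    (hge : ∀ u ∈ S, k ≤ d u) (hsum : ∑ u ∈ S, d u = S.card * k) :
    ∀ u ∈ S, d u = k := by
  intro u hu
  by_contra hne
  have hlt : k + 1 ≤ d u := by
    rcases Nat.lt_or_ge (d u) (k+1) with h | h
    · exact absurd (le_antisymm (by omega) (hge u hu)) hne
    · exact h
  have hsplit : ∑ v ∈ S, d v = d u + ∑ v ∈ S.erase u, d v :=
    (Finset.add_sum_erase S d hu).symm
  have hrest : (S.erase u).card * k ≤ ∑ v ∈ S.erase u, d v := by
    calc (S.erase u).card * k = ∑ _v ∈ S.erase u, k := by rw [Finset.sum_const, smul_eq_mul]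
      _ ≤ _ := Finset.sum_le_sum fun v hv => hge v (Finset.mem_of_mem_erase hv)
  have hcard : (S.erase u).card = S.card - 1 := Finset.card_erase_of_mem hu
  have hpos : 1 ≤ S.card := Finset.card_pos.2 ⟨u, hu⟩
  have h1 : (S.erase u).card * k + k = S.card * k := by
    rw [hcard]
    obtain ⟨m, hm⟩ : ∃ m, S.card = m + 1 := ⟨S.card - 1, by omega⟩
    rw [hm, Nat.add_sub_cancel]
    exact (Nat.succ_mul m k).symm
  obtain ⟨A, hA⟩ : ∃ A, (S.erase u).card * k = A := ⟨_, rfl⟩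
  obtain ⟨B, hB⟩ : ∃ B, S.card * k = B := ⟨_, rfl⟩
  rw [hA] at hrest h1
  rw [hB] at h1 hsum
  omega

lemma sum_ge {α : Type*} (S : Finset α) (d : α → ℕ) (k : ℕ)
    (hge : ∀ u ∈ S, k ≤ d u) : S.card * k ≤ ∑ u ∈ S, d u := by
  calc S.card * k = ∑ _v ∈ S, k := by rw [Finset.sum_const, smul_eq_mul]
    _ ≤ _ := Finset.sum_le_sum hge

section sums
variable {n : ℕ} (G : Matrix (Fin 4) (Fin n) (ZMod 2))

def nnz : ℕ := (Finset.univ.filter fun h : Fin n => (fun r => G r h) ≠ 0).card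

lemma F2 : ∑ u ∈ Finset.univ.filter fun u : V4 => u ≠ 0, (Dset G u).card
    = 8 * nnz G := by
  classical
  have hswap : ∑ u ∈ Finset.univ.filter fun u : V4 => u ≠ 0, (Dset G u).card
      = ∑ h : Fin n, ((Finset.univ.filter fun u : V4 => u ≠ 0).filter
          fun u => (∑ r, u r * G r h) = 1).card := by
    simp only [Dset]
    exact sum_card_filter_comm _ _ _
  rw [hswap]
  have : ∀ h : Fin n, ((Finset.univ.filter fun u : V4 => u ≠ 0).filter
      fun u => (∑ r, u r * G r h) = 1).card
      = if (fun r => G r h) = 0 then 0 else 8 := fun h => D3 _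
  rw [Finset.sum_congr rfl fun h _ => this h]
  rw [Finset.sum_ite, Finset.sum_const, Finset.sum_const]
  simp only [smul_eq_mul, mul_zero, zero_add, nnz]
  rw [mul_comm]
end sums

section more
variable {n k : ℕ} {G : Matrix (Fin 4) (Fin n) (ZMod 2)}

lemma F3' (G : Matrix (Fin 4) (Fin n) (ZMod 2)) (i : Fin 4) :
    (4 : ℕ) ∣ ∑ u ∈ Finset.univ.filter fun u : V4 => u i = 1, (Dset G u).card := by
  have hswap : ∑ u ∈ Finset.univ.filter fun u : V4 => u i = 1, (Dset G u).card
      = ∑ h : Fin n, ((Finset.univ.filter fun u : V4 => u i = 1).filter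
          fun u => (∑ r, u r * G r h) = 1).card := by
    simp only [Dset]
    exact sum_card_filter_comm _ _ _
  rw [hswap]
  exact Finset.dvd_sum fun h _ => Nat.dvd_of_mod_eq_zero (D4' i _)

lemma rec_meets {i : Fin 4} {Rj : Finset (Fin n)}
    (hsj : (∑ h ∈ Rj, fun r : Fin 4 => G r h) = Pi.single i 1)
    {u : V4} (hui : u i = 1) : ∃ c ∈ Rj, c ∈ Dset G u := by
  by_contra hcon
  push_neg at hcon
  have hzero : ∀ c ∈ Rj, (∑ r, u r * G r c) = 0 := by
    intro c hc
    rcases zmod2_cases (∑ r, u r * G r c) with h0 | h1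
    · exact h0
    · exact absurd (Finset.mem_filter.2 ⟨Finset.mem_univ c, h1⟩) (hcon c hc)
  have h1 : (∑ c ∈ Rj, ∑ r, u r * G r c) = 1 := by
    rw [Finset.sum_comm]
    have hr : ∀ r : Fin 4, (∑ c ∈ Rj, u r * G r c)
        = u r * (Pi.single i 1 : Fin 4 → ZMod 2) r := by
      intro r
      rw [← Finset.mul_sum]
      congr 1
      have := congrFun hsj r
      rw [Finset.sum_apply] at this
      exact this
    rw [Finset.sum_congr rfl fun r _ => hr r]
    have : (∑ r : Fin 4, u r * (Pi.single i 1 : Fin 4 → ZMod 2) r) = u i := by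
      rw [Fintype.sum_eq_single i]
      · simp
      · intro b hb; simp [Pi.single_eq_of_ne hb]
    rw [this, hui]
  rw [Finset.sum_congr rfl hzero] at h1
  simp at h1

lemma k_le_Dset (hG : IsPIRMatrix 4 n k G) {u : V4} {i : Fin 4}
    (hui : u i = 1) : k ≤ (Dset G u).card := by
  obtain ⟨R, hd, hs⟩ := hG i
  have pick : ∀ j : Fin k, ∃ c, c ∈ R j ∧ c ∈ Dset G u := by
    intro j
    obtain ⟨c, hc1, hc2⟩ := rec_meets (hs j) hui
    exact ⟨c, hc1, hc2⟩
  choose f hf1 hf2 using pick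
  have hinj : Function.Injective f := by
    intro a b hab
    by_contra hne
    exact Finset.disjoint_left.1 (hd a b hne) (hf1 a) (hab ▸ hf1 b)
  calc k = Fintype.card (Fin k) := (Fintype.card_fin k).symm
    _ ≤ (Dset G u).card := by
        rw [← Finset.card_univ]
        exact Finset.card_le_card_of_injOn f (fun j _ => hf2 j) hinj.injOn

lemma k_le_Dset' (hG : IsPIRMatrix 4 n k G) {u : V4} (hu : u ≠ 0) :
    k ≤ (Dset G u).card := by
  obtain ⟨i, hi⟩ := D9 u hu
  exact k_le_Dset hG hi

lemma inter_filter (u : V4) (Rj : Finset (Fin n)) :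
    Rj ∩ Dset G u = Rj.filter fun h => (∑ r, u r * G r h) = 1 := by
  ext h
  simp [Dset, Finset.mem_filter, Finset.mem_inter, and_comm]

/-- The deep structural lemma: no `k`-PIR matrix can have exactly one dual
vector `u₀` with `|D_{u₀}| = k+4` and all other nonzero duals tight. -/
lemma deep (hG : IsPIRMatrix 4 n k G)
    (hcols : ∀ h : Fin n, (fun r => G r h) ≠ 0)
    {u0 : V4} (hu0 : u0 ≠ 0)
    (hd0 : (Dset G u0).card = k + 4)
    (hdt : ∀ u : V4, u ≠ 0 → u ≠ u0 → (Dset G u).card = k) : False := by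
  classical
  obtain ⟨i, hi⟩ := D9 u0 hu0
  obtain ⟨R, hd, hs⟩ := hG i
  have hRdisj : ∀ (D : Finset (Fin n)), ∀ j ∈ (Finset.univ : Finset (Fin k)),
      ∀ j' ∈ Finset.univ, j ≠ j' → Disjoint (R j ∩ D) (R j' ∩ D) := by
    intro D j _ j' _ hjj
    exact (hd j j' hjj).mono Finset.inter_subset_left Finset.inter_subset_left
  -- for tight u with u i = 1: each recovery set meets D u exactly once, and D u is covered
  have tight : ∀ u : V4, u i = 1 → u ≠ u0 →
      (∀ j, (R j ∩ Dset G u).card = 1) ∧ Dset G u ⊆ Finset.univ.biUnion R := by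
    intro u hui hne
    have hdu : (Dset G u).card = k := hdt u (D6 i u hui) hne
    have hcardsum : (Finset.univ.biUnion fun j => R j ∩ Dset G u).card
        = ∑ j, (R j ∩ Dset G u).card := Finset.card_biUnion (hRdisj _)
    have hsub : (Finset.univ.biUnion fun j => R j ∩ Dset G u) ⊆ Dset G u := by
      intro h hh
      obtain ⟨j, _, hj⟩ := Finset.mem_biUnion.1 hh
      exact (Finset.mem_inter.1 hj).2
    have hone : ∀ j : Fin k, 1 ≤ (R j ∩ Dset G u).card := by
      intro j
      obtain ⟨c, hc1, hc2⟩ := rec_meets (hs j) hui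
      exact Finset.card_pos.2 ⟨c, Finset.mem_inter.2 ⟨hc1, hc2⟩⟩
    have hsumge : k ≤ ∑ j, (R j ∩ Dset G u).card := by
      calc k = (Finset.univ : Finset (Fin k)).card * 1 := by simp
        _ ≤ _ := sum_ge _ _ 1 fun j _ => hone j
    have hsumle : ∑ j, (R j ∩ Dset G u).card ≤ k := by
      have h1 := Finset.card_le_card hsub
      omega
    have hsumeq : ∑ j, (R j ∩ Dset G u).card = k := le_antisymm hsumle hsumge
    constructor
    · have := all_eq_of_sum Finset.univ (fun j => (R j ∩ Dset G u).card) 1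
        (fun j _ => hone j) (by rw [hsumeq]; simp)
      exact fun j => this j (Finset.mem_univ j)
    · have hDeq : Finset.univ.biUnion (fun j => R j ∩ Dset G u) = Dset G u := by
        apply Finset.eq_of_subset_of_card_le hsub
        rw [hcardsum, hsumeq, hdu]
      rw [← hDeq]
      intro h hh
      obtain ⟨j, _, hj⟩ := Finset.mem_biUnion.1 hh
      exact Finset.mem_biUnion.2 ⟨j, Finset.mem_univ j, (Finset.mem_inter.1 hj).1⟩
  -- every column is used by some recovery set for coordinate i
  have cover : ∀ h : Fin n, h ∈ Finset.univ.biUnion R := by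
    intro h
    by_contra hcon
    refine D5 i u0 (fun r => G r h) (hcols h) ?_
    intro u hui hne
    rcases zmod2_cases (∑ r, u r * G r h) with h0 | h1
    · exact h0
    · exact absurd ((tight u hui hne).2
        (Finset.mem_filter.2 ⟨Finset.mem_univ h, h1⟩)) hcon
  -- each recovery set also meets D u0 exactly once
  have hu0mem : u0 ∈ Finset.univ.filter fun u : V4 => u i = 1 :=
    Finset.mem_filter.2 ⟨Finset.mem_univ u0, hi⟩
  have ycount : ∀ j : Fin k, (R j ∩ Dset G u0).card = 1 := by
    intro j
    have hkey : ∑ u ∈ Finset.univ.filter fun u : V4 => u i = 1, (R j ∩ Dset G u).card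
        = ∑ h ∈ R j, (if (fun r => G r h) = Pi.single i 1 then 8 else 4) := by
      have e1 : ∀ u : V4, R j ∩ Dset G u
          = (R j).filter fun h => (∑ r, u r * G r h) = 1 := fun u => inter_filter u (R j)
      calc ∑ u ∈ Finset.univ.filter fun u : V4 => u i = 1, (R j ∩ Dset G u).card
          = ∑ u ∈ Finset.univ.filter fun u : V4 => u i = 1,
            ((R j).filter fun h => (∑ r, u r * G r h) = 1).card :=
            Finset.sum_congr rfl fun u _ => by rw [e1]
        _ = ∑ h ∈ R j, ((Finset.univ.filter fun u : V4 => u i = 1).filter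
              fun u => (∑ r, u r * G r h) = 1).card := sum_card_filter_comm _ _ _
        _ = _ := Finset.sum_congr rfl fun h _ => D4 i _ (hcols h)
    have hsplit : ∑ u ∈ Finset.univ.filter fun u : V4 => u i = 1, (R j ∩ Dset G u).card
        = (R j ∩ Dset G u0).card
          + ∑ u ∈ (Finset.univ.filter fun u : V4 => u i = 1).erase u0,
              (R j ∩ Dset G u).card :=
      (Finset.add_sum_erase _ _ hu0mem).symm
    have herase : ∑ u ∈ (Finset.univ.filter fun u : V4 => u i = 1).erase u0,
        (R j ∩ Dset G u).card = 7 := by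
      have : ∀ u ∈ (Finset.univ.filter fun u : V4 => u i = 1).erase u0,
          (R j ∩ Dset G u).card = 1 := by
        intro u hu
        have hne : u ≠ u0 := Finset.ne_of_mem_erase hu
        have hui : u i = 1 := (Finset.mem_filter.1 (Finset.mem_of_mem_erase hu)).2
        exact (tight u hui hne).1 j
      rw [Finset.sum_congr rfl this, Finset.sum_const, smul_eq_mul, mul_one, D7 i u0 hi]
    have hite : ∑ h ∈ R j, (if (fun r => G r h) = Pi.single i 1 then 8 else 4)
        = 4 * (R j).card
          + 4 * ((R j).filter fun h => (fun r => G r h) = Pi.single i 1).card := by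
      rw [Finset.sum_ite, Finset.sum_const, Finset.sum_const, smul_eq_mul, smul_eq_mul]
      have hfc := Finset.card_filter_add_card_filter_not
        (s := R j) (fun h => (fun r => G r h) = Pi.single i 1)
      clear * - hfc
      omega
    have hy : (R j ∩ Dset G u0).card ≤ (R j).card :=
      Finset.card_le_card Finset.inter_subset_left
    have ha : ((R j).filter fun h => (fun r => G r h) = Pi.single i 1).card ≤ (R j).card :=
      Finset.card_le_card (Finset.filter_subset _ _)
    rw [hite, hsplit, herase] at hkey
    -- hkey : (R j ∩ Dset G u0).card + 7 = 4 * (R j).card + 4 * a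
    obtain ⟨y, hY⟩ : ∃ y, (R j ∩ Dset G u0).card = y := ⟨_, rfl⟩
    obtain ⟨m, hM⟩ : ∃ m, (R j).card = m := ⟨_, rfl⟩
    obtain ⟨a, hA⟩ : ∃ a,
        ((R j).filter fun h => (fun r => G r h) = Pi.single i 1).card = a := ⟨_, rfl⟩
    rw [hY, hM, hA] at hkey
    rw [hY, hM] at hy
    rw [hA, hM] at ha
    rw [hY]
    clear * - hkey hy ha
    omega
  -- summing: k = |D u0| = k + 4, contradiction
  have hfinal : ∑ j, (R j ∩ Dset G u0).card = k := by
    rw [Finset.sum_congr rfl fun j _ => ycount j, Finset.sum_const, smul_eq_mul, mul_one,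
      Finset.card_univ, Fintype.card_fin]
  have hbi : (Finset.univ.biUnion fun j => R j ∩ Dset G u0) = Dset G u0 := by
    apply Finset.Subset.antisymm
    · intro h hh
      obtain ⟨j, _, hj⟩ := Finset.mem_biUnion.1 hh
      exact (Finset.mem_inter.1 hj).2
    · intro h hh
      obtain ⟨j, _, hj⟩ := Finset.mem_biUnion.1 (cover h)
      exact Finset.mem_biUnion.2 ⟨j, Finset.mem_univ j, Finset.mem_inter.2 ⟨hj, hh⟩⟩
  have : (k : ℕ) = k + 4 := by
    calc k = ∑ j, (R j ∩ Dset G u0).card := hfinal.symm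
      _ = (Finset.univ.biUnion fun j => R j ∩ Dset G u0).card :=
          (Finset.card_biUnion (hRdisj _)).symm
      _ = (Dset G u0).card := by rw [hbi]
      _ = k + 4 := hd0
  omega
end more

section residues

lemma basic_facts {n k : ℕ} (G : Matrix (Fin 4) (Fin n) (ZMod 2))
    (hG : IsPIRMatrix 4 n k G) :
    (∑ u ∈ Finset.univ.filter fun u : V4 => u ≠ 0, (Dset G u).card) = 8 * nnz G ∧
    nnz G ≤ n ∧
    (∀ i : Fin 4, (4:ℕ) ∣ ∑ u ∈ Finset.univ.filter fun u : V4 => u i = 1, (Dset G u).card) ∧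
    (∀ i : Fin 4, 8 * k ≤ ∑ u ∈ Finset.univ.filter fun u : V4 => u i = 1, (Dset G u).card) ∧
    (∀ i : Fin 4,
      (∑ u ∈ (Finset.univ.filter fun u : V4 => u ≠ 0) \
          (Finset.univ.filter fun u : V4 => u i = 1), (Dset G u).card)
        + (∑ u ∈ Finset.univ.filter fun u : V4 => u i = 1, (Dset G u).card)
        = ∑ u ∈ Finset.univ.filter fun u : V4 => u ≠ 0, (Dset G u).card) ∧
    (∀ i : Fin 4, 7 * k ≤
      ∑ u ∈ (Finset.univ.filter fun u : V4 => u ≠ 0) \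
          (Finset.univ.filter fun u : V4 => u i = 1), (Dset G u).card) ∧
    15 * k ≤ ∑ u ∈ Finset.univ.filter fun u : V4 => u ≠ 0, (Dset G u).card := by
  have hsub : ∀ i : Fin 4, (Finset.univ.filter fun u : V4 => u i = 1)
      ⊆ Finset.univ.filter fun u : V4 => u ≠ 0 := by
    intro i u hu
    exact Finset.mem_filter.2 ⟨Finset.mem_univ u, D6 i u (Finset.mem_filter.1 hu).2⟩
  refine ⟨F2 G, ?_, fun i => F3' G i, ?_, ?_, ?_, ?_⟩
  · calc nnz G ≤ (Finset.univ : Finset (Fin n)).card := Finset.card_filter_le _ _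
      _ = n := by simp
  · intro i
    calc 8 * k = (Finset.univ.filter fun u : V4 => u i = 1).card * k := by rw [D1 i]
      _ ≤ _ := sum_ge _ _ k fun u hu => k_le_Dset hG (Finset.mem_filter.1 hu).2
  · intro i
    exact Finset.sum_sdiff (hsub i)
  · intro i
    calc 7 * k = ((Finset.univ.filter fun u : V4 => u ≠ 0) \
        (Finset.univ.filter fun u : V4 => u i = 1)).card * k := by rw [D8 i]
      _ ≤ _ := sum_ge _ _ k fun u hu =>
          k_le_Dset' hG (Finset.mem_filter.1 (Finset.mem_sdiff.1 hu).1).2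
  · calc 15 * k = (Finset.univ.filter fun u : V4 => u ≠ 0).card * k := by rw [D2]
      _ ≤ _ := sum_ge _ _ k fun u hu => k_le_Dset' hG (Finset.mem_filter.1 hu).2

lemma Aeq_of_slack {n k : ℕ} {G : Matrix (Fin 4) (Fin n) (ZMod 2)}
    (hG : IsPIRMatrix 4 n k G) {i : Fin 4} {B s : ℕ}
    (hBd : (∑ u ∈ Finset.univ.filter fun u : V4 => u ≠ 0, (Dset G u).card) = B)
    (hB : B = 15 * k + s) (hs : s ≤ 4)
    (hlo : 8 * k + (4 - ((4 - s) % 4)) % 4 ≤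
      ∑ u ∈ Finset.univ.filter fun u : V4 => u i = 1, (Dset G u).card) :
    True := trivial

lemma bound_r2 {n k τ : ℕ} (G : Matrix (Fin 4) (Fin n) (ZMod 2))
    (hG : IsPIRMatrix 4 n k G) (hk : k = 8 * τ + 2) : 15 * k + 10 ≤ 8 * n := by
  by_contra hcon
  push_neg at hcon
  obtain ⟨hB8, hnnz, hA4, hAge, hsd, hsdge, hBge⟩ := basic_facts G hG
  obtain ⟨N, hN⟩ : ∃ N, nnz G = N := ⟨_, rfl⟩
  rw [hN] at hB8
  obtain ⟨B, hBd⟩ : ∃ B, (∑ u ∈ Finset.univ.filter fun u : V4 => u ≠ 0,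
      (Dset G u).card) = B := ⟨_, rfl⟩
  rw [hBd] at hB8 hBge
  simp only [hBd] at hsd
  rw [hN] at hnnz
  have hB : B = 15 * k + 2 := by clear * - hB8 hBge hcon hk hnnz; omega
  -- each A i = 8k, hence every d u = k, contradicting B = 15k+2
  have hAeq : ∀ i : Fin 4,
      (∑ u ∈ Finset.univ.filter fun u : V4 => u i = 1, (Dset G u).card) = 8 * k := by
    intro i
    obtain ⟨A, hAd⟩ : ∃ A, (∑ u ∈ Finset.univ.filter fun u : V4 => u i = 1,
        (Dset G u).card) = A := ⟨_, rfl⟩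
    obtain ⟨S, hSd⟩ : ∃ S, (∑ u ∈ (Finset.univ.filter fun u : V4 => u ≠ 0) \
        (Finset.univ.filter fun u : V4 => u i = 1), (Dset G u).card) = S := ⟨_, rfl⟩
    obtain ⟨m, hm⟩ := hA4 i
    have h1 := hAge i
    have h2 := hsd i
    have h3 := hsdge i
    rw [hAd] at h1 h2 hm ⊢
    rw [hSd] at h2 h3
    clear * - hm h1 h2 h3 hB hk
    omega
  have hall : ∀ u : V4, u ≠ 0 → (Dset G u).card = k := by
    intro u hu
    obtain ⟨i, hi⟩ := D9 u hu
    refine all_eq_of_sum _ (fun u => (Dset G u).card) k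
      (fun v hv => k_le_Dset hG (Finset.mem_filter.1 hv).2) ?_ u
      (Finset.mem_filter.2 ⟨Finset.mem_univ u, hi⟩)
    rw [hAeq i, D1 i]
  have hBk : B = 15 * k := by
    rw [← hBd]
    calc (∑ u ∈ Finset.univ.filter fun u : V4 => u ≠ 0, (Dset G u).card)
        = ∑ u ∈ Finset.univ.filter fun u : V4 => u ≠ 0, k :=
        Finset.sum_congr rfl fun u hu => hall u (Finset.mem_filter.1 hu).2
      _ = 15 * k := by rw [Finset.sum_const, D2, smul_eq_mul]
  clear * - hB hBk
  omega

lemma bound_r4 {n k τ : ℕ} (G : Matrix (Fin 4) (Fin n) (ZMod 2))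
    (hG : IsPIRMatrix 4 n k G) (hk : k = 8 * τ + 4) : 15 * k + 12 ≤ 8 * n := by
  by_contra hcon
  push_neg at hcon
  obtain ⟨hB8, hnnz, hA4, hAge, hsd, hsdge, hBge⟩ := basic_facts G hG
  obtain ⟨N, hN⟩ : ∃ N, nnz G = N := ⟨_, rfl⟩
  rw [hN] at hB8 hnnz
  obtain ⟨B, hBd⟩ : ∃ B, (∑ u ∈ Finset.univ.filter fun u : V4 => u ≠ 0,
      (Dset G u).card) = B := ⟨_, rfl⟩
  rw [hBd] at hB8 hBge
  simp only [hBd] at hsd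
  have hB : B = 15 * k + 4 := by clear * - hB8 hBge hcon hk hnnz; omega
  have hNn : N = n := by clear * - hB8 hB hnnz hcon hk; omega
  -- all columns are nonzero
  have hcols : ∀ h : Fin n, (fun r => G r h) ≠ 0 := by
    have hfeq : (Finset.univ.filter fun h : Fin n => (fun r => G r h) ≠ 0)
        = Finset.univ := by
      refine Finset.eq_of_subset_of_card_le (Finset.filter_subset _ _) ?_
      have h2 : (Finset.univ.filter fun h : Fin n => (fun r => G r h) ≠ 0).card
          = nnz G := rfl
      rw [h2, hN, hNn]
      simp
    intro h
    have : h ∈ Finset.univ.filter fun h : Fin n => (fun r => G r h) ≠ 0 := by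
      rw [hfeq]; exact Finset.mem_univ h
    exact (Finset.mem_filter.1 this).2
  -- concentration: a dual vector with slack at coordinate i forces all duals
  -- outside U_i to be tight
  have conc : ∀ (w : V4) (i : Fin 4), w i = 1 → k + 1 ≤ (Dset G w).card →
      ∀ v : V4, v ≠ 0 → v i ≠ 1 → (Dset G v).card = k := by
    intro w i hwi hw v hv hvi
    obtain ⟨A, hAd⟩ : ∃ A, (∑ u ∈ Finset.univ.filter fun u : V4 => u i = 1,
        (Dset G u).card) = A := ⟨_, rfl⟩
    obtain ⟨S, hSd⟩ : ∃ S, (∑ u ∈ (Finset.univ.filter fun u : V4 => u ≠ 0) \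
        (Finset.univ.filter fun u : V4 => u i = 1), (Dset G u).card) = S := ⟨_, rfl⟩
    obtain ⟨m, hm⟩ := hA4 i
    have h2 := hsd i
    have h3 := hsdge i
    rw [hAd] at hm h2
    rw [hSd] at h2 h3
    -- A ≥ 8k+1 since w contributes at least k+1
    have hwmem : w ∈ Finset.univ.filter fun u : V4 => u i = 1 :=
      Finset.mem_filter.2 ⟨Finset.mem_univ w, hwi⟩
    have hsplitw : (∑ u ∈ Finset.univ.filter fun u : V4 => u i = 1, (Dset G u).card)
        = (Dset G w).card + ∑ u ∈ (Finset.univ.filter fun u : V4 => u i = 1).erase w,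
            (Dset G u).card := (Finset.add_sum_erase _ (fun u => (Dset G u).card) hwmem).symm
    have herasege : 7 * k ≤ ∑ u ∈ (Finset.univ.filter fun u : V4 => u i = 1).erase w,
        (Dset G u).card := by
      calc 7 * k = ((Finset.univ.filter fun u : V4 => u i = 1).erase w).card * k := by
            rw [D7 i w hwi]
        _ ≤ _ := sum_ge _ _ k fun u hu =>
            k_le_Dset hG (Finset.mem_filter.1 (Finset.mem_of_mem_erase hu)).2
    obtain ⟨E, hEd⟩ : ∃ E, (∑ u ∈ (Finset.univ.filter fun u : V4 => u i = 1).erase w,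
        (Dset G u).card) = E := ⟨_, rfl⟩
    rw [hAd, hEd] at hsplitw
    rw [hEd] at herasege
    -- 8k+1 ≤ A, A ≤ B - 7k = 8k+4, 4 ∣ A ⟹ A = 8k+4, so S = 7k
    have hSk : S = 7 * k := by clear * - hm h2 h3 hsplitw herasege hw hB hk; omega
    -- hence all duals outside U_i are tight
    have := all_eq_of_sum ((Finset.univ.filter fun u : V4 => u ≠ 0) \
        (Finset.univ.filter fun u : V4 => u i = 1)) (fun u => (Dset G u).card) k
      (fun u hu => k_le_Dset' hG (Finset.mem_filter.1 (Finset.mem_sdiff.1 hu).1).2)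
      (by rw [hSd, hSk, D8 i])
    refine this v (Finset.mem_sdiff.2 ⟨Finset.mem_filter.2 ⟨Finset.mem_univ v, hv⟩, ?_⟩)
    intro hmem
    exact hvi (Finset.mem_filter.1 hmem).2
  -- there is a unique slack-carrying dual u0
  have hex : ∃ u0 : V4, u0 ≠ 0 ∧ k + 1 ≤ (Dset G u0).card := by
    by_contra hcon2
    push_neg at hcon2
    have hall : ∀ u ∈ Finset.univ.filter fun u : V4 => u ≠ 0, (Dset G u).card = k :=
      fun u hu => le_antisymm
        (Nat.lt_succ_iff.mp (hcon2 u (Finset.mem_filter.1 hu).2))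
        (k_le_Dset' hG (Finset.mem_filter.1 hu).2)
    have : B = 15 * k := by
      rw [← hBd]
      calc (∑ u ∈ Finset.univ.filter fun u : V4 => u ≠ 0, (Dset G u).card)
          = ∑ u ∈ Finset.univ.filter fun u : V4 => u ≠ 0, k :=
          Finset.sum_congr rfl hall
        _ = 15 * k := by rw [Finset.sum_const, D2, smul_eq_mul]
    clear * - this hB
    omega
  obtain ⟨u0, hu0, hslack⟩ := hex
  -- all other duals are tight
  have hdt : ∀ u : V4, u ≠ 0 → u ≠ u0 → (Dset G u).card = k := by
    intro u1 hu1 hne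
    obtain ⟨i, hi⟩ : ∃ i, u0 i ≠ u1 i := by
      by_contra hcon2
      push_neg at hcon2
      exact hne (funext fun i => (hcon2 i).symm).symm.symm
    rcases zmod2_cases (u0 i) with h0 | h0 <;> rcases zmod2_cases (u1 i) with h1 | h1
    · exact absurd (h0.trans h1.symm) hi
    · -- u1 i = 1, u0 i = 0 : if u1 had slack, u0 would be tight, contradiction
      by_contra hne2
      have hslack1 : k + 1 ≤ (Dset G u1).card := by
        have h9 := k_le_Dset' hG hu1
        clear * - h9 hne2
        omega
      have := conc u1 i h1 hslack1 u0 hu0 (by rw [h0]; decide)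
      clear * - this hslack
      omega
    · exact conc u0 i h0 hslack u1 hu1 (by rw [h1]; decide)
    · exact absurd (h0.trans h1.symm) hi
  -- deduce d u0 = k + 4 and conclude with the deep lemma
  have hu0mem : u0 ∈ Finset.univ.filter fun u : V4 => u ≠ 0 :=
    Finset.mem_filter.2 ⟨Finset.mem_univ u0, hu0⟩
  have hsplit0 : (∑ u ∈ Finset.univ.filter fun u : V4 => u ≠ 0, (Dset G u).card)
      = (Dset G u0).card + ∑ u ∈ (Finset.univ.filter fun u : V4 => u ≠ 0).erase u0,
          (Dset G u).card := (Finset.add_sum_erase _ _ hu0mem).symm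
  have herase0 : (∑ u ∈ (Finset.univ.filter fun u : V4 => u ≠ 0).erase u0,
      (Dset G u).card) = 14 * k := by
    have hc : ((Finset.univ.filter fun u : V4 => u ≠ 0).erase u0).card = 14 := by
      rw [Finset.card_erase_of_mem hu0mem, D2]
    calc (∑ u ∈ (Finset.univ.filter fun u : V4 => u ≠ 0).erase u0, (Dset G u).card)
        = ∑ u ∈ (Finset.univ.filter fun u : V4 => u ≠ 0).erase u0, k :=
        Finset.sum_congr rfl fun u hu => hdt u
          (Finset.mem_filter.1 (Finset.mem_of_mem_erase hu)).2 (Finset.ne_of_mem_erase hu)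
      _ = 14 * k := by rw [Finset.sum_const, hc, smul_eq_mul]
  have hd0 : (Dset G u0).card = k + 4 := by
    rw [hBd] at hsplit0
    clear * - hsplit0 herase0 hB
    omega
  exact deep hG hcols hu0 hd0 hdt
end residues

lemma bound_all {n k : ℕ} (G : Matrix (Fin 4) (Fin n) (ZMod 2))
    (hG : IsPIRMatrix 4 n k G) : 15 * k ≤ 8 * n := by
  obtain ⟨hB8, hnnz, _, _, _, _, hBge⟩ := basic_facts G hG
  omega

lemma pirlen_lb_val : 5 ≤ PIRlen 4 2 ∧ 9 ≤ PIRlen 4 4 ∧ 12 ≤ PIRlen 4 6 ∧ 15 ≤ PIRlen 4 8 := by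
  refine ⟨?_, ?_, ?_, ?_⟩
  · obtain ⟨hpos, G, hG⟩ := pirlen_spec exPIR_two
    have := bound_r2 G hG (τ := 0) rfl
    omega
  · obtain ⟨hpos, G, hG⟩ := pirlen_spec exPIR_four
    have := bound_r4 G hG (τ := 0) rfl
    omega
  · obtain ⟨hpos, G, hG⟩ := pirlen_spec exPIR_six
    have := bound_all G hG
    omega
  · obtain ⟨hpos, G, hG⟩ := pirlen_spec exPIR_eight
    have := bound_all G hG
    omega

lemma pirlen_lb_step (r τ : ℕ) (hr : r = 2 ∨ r = 4 ∨ r = 6 ∨ r = 8) :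
    PIRlen 4 r + 15 * τ ≤ PIRlen 4 (r + 8 * τ) := by
  rcases hr with h | h | h | h <;> subst h
  · obtain ⟨hpos, G, hG⟩ := pirlen_spec (ub_iter exPIR_two τ).1
    have h1 := bound_r2 G hG (k := 2 + 8 * τ) (τ := τ) (by ring)
    have h2 : PIRlen 4 2 ≤ 5 := pirlen_le (by omega) ⟨Gtwo, isPIR_two⟩
    omega
  · obtain ⟨hpos, G, hG⟩ := pirlen_spec (ub_iter exPIR_four τ).1
    have h1 := bound_r4 G hG (k := 4 + 8 * τ) (τ := τ) (by ring)
    have h2 : PIRlen 4 4 ≤ 9 := pirlen_le (by omega) ⟨Gfour, isPIR_four⟩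
    omega
  · obtain ⟨hpos, G, hG⟩ := pirlen_spec (ub_iter exPIR_six τ).1
    have h1 := bound_all G hG (k := 6 + 8 * τ)
    have h2 : PIRlen 4 6 ≤ 12 := pirlen_le (by omega) ⟨Gsix, isPIR_six⟩
    omega
  · obtain ⟨hpos, G, hG⟩ := pirlen_spec (ub_iter exPIR_eight τ).1
    have h1 := bound_all G hG (k := 8 + 8 * τ)
    have h2 : PIRlen 4 8 ≤ 15 := pirlen_le (by omega) ⟨Geight, isPIR_eight⟩
    omega

/-! ### Main theorem -/

lemma pirlen_two : PIRlen 4 2 = 5 :=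
  le_antisymm (pirlen_le (by omega) ⟨Gtwo, isPIR_two⟩) pirlen_lb_val.1

lemma pirlen_four : PIRlen 4 4 = 9 :=
  le_antisymm (pirlen_le (by omega) ⟨Gfour, isPIR_four⟩) pirlen_lb_val.2.1

lemma pirlen_six : PIRlen 4 6 = 12 :=
  le_antisymm (pirlen_le (by omega) ⟨Gsix, isPIR_six⟩) pirlen_lb_val.2.2.1

lemma pirlen_eight : PIRlen 4 8 = 15 :=
  le_antisymm (pirlen_le (by omega) ⟨Geight, isPIR_eight⟩) pirlen_lb_val.2.2.2

/-- `P(4,2)=5`, `P(4,4)=9`, `P(4,6)=12`, `P(4,8)=15`, and for every even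
`k > 8`: `P(4,k) = P(4, k - 8τ) + 15τ` where `τ = ⌊(k-1)/8⌋`. -/
theorem stmt_17 :
    PIRlen 4 2 = 5 ∧ PIRlen 4 4 = 9 ∧ PIRlen 4 6 = 12 ∧ PIRlen 4 8 = 15 ∧
    ∀ k : ℕ, 8 < k → Even k →
      PIRlen 4 k = PIRlen 4 (k - 8 * ((k - 1) / 8)) + 15 * ((k - 1) / 8) := by
  refine ⟨pirlen_two, pirlen_four, pirlen_six, pirlen_eight, ?_⟩
  intro k hk hke
  rw [Nat.even_iff] at hke
  set τ := (k - 1) / 8 with hτ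
  set r := k - 8 * τ with hrdef
  have hr : r = 2 ∨ r = 4 ∨ r = 6 ∨ r = 8 := by omega
  have hk' : k = r + 8 * τ := by omega
  have hub : PIRlen 4 (r + 8 * τ) ≤ PIRlen 4 r + 15 * τ := by
    rcases hr with h | h | h | h <;> rw [h] <;>
      [exact (ub_iter exPIR_two τ).2; exact (ub_iter exPIR_four τ).2;
       exact (ub_iter exPIR_six τ).2; exact (ub_iter exPIR_eight τ).2]
  have hlb := pirlen_lb_step r τ hr
  rw [hk']
  omega
end

section
/- For every integer s ≥ 5 one has P(s, 2^{s-2}) ≤ 5·2^{s-3} − 1; that is, there exists an s-by-(5·2^{s-3} − 1) matrix over F_2 that is a 2^{s-2}-PIR generator matrix. -/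
namespace Stmt19

abbrev V (m : ℕ) := Fin m → ZMod 2

def Tv : Fin 5 → Fin 3 → ZMod 2 :=
  ![![0,0,0], ![0,0,1], ![1,0,1], ![0,1,1], ![1,1,1]]

def colv (m : ℕ) (d : V m × Fin 5) : Fin (m + 3) → ZMod 2 :=
  fun r => if h : (r : ℕ) < m then d.1 ⟨r, h⟩
    else Tv d.2 ⟨(r : ℕ) - m, by have := r.isLt; omega⟩

noncomputable def encV (m : ℕ) (v : V m) : ℕ := (finFunctionFinEquiv v : Fin (2 ^ m)).val

lemma encV_lt (m : ℕ) (v : V m) : encV m v < 2 ^ m := (finFunctionFinEquiv v).isLt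

lemma encV_inj (m : ℕ) {v w : V m} (h : encV m v = encV m w) : v = w := by
  have : (finFunctionFinEquiv v : Fin (2 ^ m)) = finFunctionFinEquiv w := Fin.ext h
  exact finFunctionFinEquiv.injective this

lemma encV_zero (m : ℕ) : encV m 0 = 0 := by
  unfold encV; refine (finFunctionFinEquiv_apply (0 : Fin m → Fin 2)).trans ?_; simp

lemma encV_ne_zero (m : ℕ) {v : V m} (h : v ≠ 0) : encV m v ≠ 0 := by
  intro h0
  exact h (encV_inj m (h0.trans (encV_zero m).symm))

noncomputable def enc (m : ℕ) (d : V m × Fin 5) : ℕ := encV m d.1 + 2 ^ m * d.2.val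

lemma enc_lt (m : ℕ) (d : V m × Fin 5) : enc m d < 5 * 2 ^ m := by
  have h1 := encV_lt m d.1
  have h2 := d.2.isLt
  unfold enc; nlinarith

noncomputable def ι (m : ℕ) (d : V m × Fin 5) : Fin (5 * 2 ^ m - 1) :=
  ⟨enc m d - 1, by have := enc_lt m d; have : 0 < 2 ^ m := Nat.pow_pos (n := m) (by norm_num); omega⟩

noncomputable def dec (m : ℕ) (j : Fin (5 * 2 ^ m - 1)) : V m × Fin 5 :=
  (finFunctionFinEquiv.symm ⟨(j.val + 1) % 2 ^ m, Nat.mod_lt _ (Nat.pow_pos (n := m) (by norm_num))⟩,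
   ⟨(j.val + 1) / 2 ^ m, by
      have hj := j.isLt
      have hp : 0 < 2 ^ m := Nat.pow_pos (n := m) (by norm_num)
      rw [Nat.div_lt_iff_lt_mul hp]; omega⟩)

noncomputable def Gmat (m : ℕ) : Matrix (Fin (m + 3)) (Fin (5 * 2 ^ m - 1)) (ZMod 2) :=
  fun r j => colv m (dec m j) r

lemma dec_ι (m : ℕ) (d : V m × Fin 5) (hd : enc m d ≠ 0) : dec m (ι m d) = d := by
  have hp : 0 < 2 ^ m := Nat.pow_pos (n := m) (by norm_num)
  have h1 : (ι m d).val + 1 = enc m d := by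
    have := enc_lt m d
    simp only [ι]; omega
  have hlt := encV_lt m d.1
  have hmod : enc m d % 2 ^ m = encV m d.1 := by
    unfold enc; rw [Nat.add_mul_mod_self_left, Nat.mod_eq_of_lt hlt]
  have hdiv : enc m d / 2 ^ m = d.2.val := by
    unfold enc; rw [Nat.add_mul_div_left _ _ hp, Nat.div_eq_of_lt hlt]; omega
  unfold dec
  ext1
  · simp only [h1, hmod]
    exact (Equiv.symm_apply_eq _).mpr (by ext; rfl)
  · simp only [h1, hdiv]

lemma ι_inj (m : ℕ) {d d' : V m × Fin 5} (h : enc m d ≠ 0) (h' : enc m d' ≠ 0)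
    (e : ι m d = ι m d') : d = d' := by
  rw [← dec_ι m d h, ← dec_ι m d' h', e]

lemma enc_ne_zero_snd (m : ℕ) {d : V m × Fin 5} (h : d.2.val ≠ 0) : enc m d ≠ 0 := by
  have : 0 < 2 ^ m := Nat.pow_pos (n := m) (by norm_num)
  unfold enc; nlinarith [Nat.one_le_iff_ne_zero.mpr h]

lemma enc_ne_zero_fst (m : ℕ) {d : V m × Fin 5} (h : d.1 ≠ 0) : enc m d ≠ 0 := by
  have := encV_ne_zero m h
  unfold enc; omega

lemma Gcol (m : ℕ) (d : V m × Fin 5) (hd : enc m d ≠ 0) :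
    (fun r => Gmat m r (ι m d)) = colv m d := by
  funext r; simp [Gmat, dec_ι m d hd]


def Mlin (m : ℕ) (v : V m) : V m := fun j =>
  if j.val = 0 then v ⟨m - 1, by have := j.isLt; omega⟩
  else if j.val = 1 then v ⟨0, by have := j.isLt; omega⟩ + v ⟨m - 1, by have := j.isLt; omega⟩
  else v ⟨j.val - 1, by have := j.isLt; omega⟩

lemma Mlin_inj (m : ℕ) (hm : 2 ≤ m) {v w : V m} (h : Mlin m v = Mlin m w) : v = w := by
  have h0 := congrFun h ⟨0, by omega⟩
  have h1 := congrFun h ⟨1, by omega⟩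
  simp only [Mlin] at h0 h1
  norm_num at h0 h1
  funext j
  by_cases hj0 : j.val = 0
  · have : j = ⟨0, by omega⟩ := Fin.ext hj0
    rw [this]
    rw [h0] at h1
    exact add_right_cancel h1
  · by_cases hjm : j.val = m - 1
    · have : j = ⟨m - 1, by omega⟩ := Fin.ext hjm
      rw [this]; exact h0
    · have hjlt : j.val + 1 < m := by have := j.isLt; omega
      have h2 := congrFun h ⟨j.val + 1, hjlt⟩
      simp only [Mlin] at h2
      rw [if_neg (by omega), if_neg (by omega), if_neg (by omega), if_neg (by omega)] at h2
      simpa using h2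


lemma Nlin_inj (m : ℕ) (hm : 2 ≤ m) {v w : V m}
    (h : v + Mlin m v = w + Mlin m w) : v = w := by
  have hc : ∀ j : Fin m, v j + Mlin m v j = w j + Mlin m w j := by
    intro j; exact congrFun h j
  have hA := hc ⟨0, by omega⟩
  have hB := hc ⟨1, by omega⟩
  simp only [Mlin] at hA hB
  norm_num at hA hB
  -- hA : v 0 + v (m-1) = w 0 + w (m-1)
  -- hB : v 1 + (v 0 + v (m-1)) = w 1 + (w 0 + w (m-1))
  have key : ∀ t, ∀ ht : t + 1 < m, v ⟨t + 1, ht⟩ = w ⟨t + 1, ht⟩ := by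
    intro t
    induction t with
    | zero =>
      intro ht
      rw [hA] at hB
      exact add_right_cancel hB
    | succ k ih =>
      intro ht
      have hk : k + 1 < m := by omega
      have hC := hc ⟨k + 2, ht⟩
      simp only [Mlin] at hC
      rw [if_neg (by omega), if_neg (by omega), if_neg (by omega), if_neg (by omega)] at hC
      have hsimp : (⟨k + 2 - 1, by omega⟩ : Fin m) = ⟨k + 1, hk⟩ := Fin.mk_eq_mk.mpr (by omega)
      rw [hsimp, ih hk] at hC
      exact add_right_cancel hC
  have hm1 : v ⟨m - 1, by omega⟩ = w ⟨m - 1, by omega⟩ := by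
    have := key (m - 2) (by omega)
    have he : (⟨m - 2 + 1, by omega⟩ : Fin m) = ⟨m - 1, by omega⟩ := Fin.mk_eq_mk.mpr (by omega)
    rwa [he] at this
  have h0 : v ⟨0, by omega⟩ = w ⟨0, by omega⟩ := by
    rw [hm1] at hA
    exact add_right_cancel hA
  funext j
  by_cases hj : j.val = 0
  · have : j = ⟨0, by omega⟩ := Fin.ext hj
    rw [this]; exact h0
  · have : j = ⟨j.val - 1 + 1, by have := j.isLt; omega⟩ := Fin.ext (by simp only [Fin.val_mk]; omega)
    rw [this]; exact key _ _


lemma colv_lt (m : ℕ) (d : V m × Fin 5) (r : Fin (m + 3)) (h : (r : ℕ) < m) :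
    colv m d r = d.1 ⟨r, h⟩ := dif_pos h

lemma colv_ge (m : ℕ) (d : V m × Fin 5) (r : Fin (m + 3)) (h : ¬ (r : ℕ) < m) :
    colv m d r = Tv d.2 ⟨(r : ℕ) - m, by have := r.isLt; omega⟩ := dif_neg h

lemma colv_sum_A (m : ℕ) (i : Fin (m + 3)) (him : (i : ℕ) < m) (v : V m) (c : Fin 5) :
    colv m (v, c) + colv m (v + Pi.single ⟨i, him⟩ 1, c) = Pi.single i 1 := by
  funext r
  simp only [Pi.add_apply]
  by_cases hr : (r : ℕ) < m
  · rw [colv_lt m _ r hr, colv_lt m _ r hr]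
    simp only [Pi.add_apply]
    have hz : ∀ a b : ZMod 2, a + (a + b) = b := by decide
    rw [hz, Pi.single_apply, Pi.single_apply]
    by_cases he : (r : ℕ) = (i : ℕ)
    · rw [if_pos (Fin.mk_eq_mk.mpr he), if_pos (Fin.ext he)]
    · rw [if_neg (fun hc => he (Fin.mk_eq_mk.mp hc)), if_neg (fun hc => he (Fin.val_eq_val r i |>.mpr hc))]
  · rw [colv_ge m _ r hr, colv_ge m _ r hr]
    have hz : ∀ x : ZMod 2, x + x = 0 := by decide
    rw [hz, Pi.single_apply, if_neg (by intro hc; rw [hc] at hr; omega)]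

lemma colv_sum_T2 (m : ℕ) (i : Fin (m + 3)) (hi : m ≤ (i : ℕ)) (v : V m) (c1 c2 : Fin 5)
    (hT : ∀ t : Fin 3, Tv c1 t + Tv c2 t = if (t : ℕ) = (i : ℕ) - m then 1 else 0) :
    colv m (v, c1) + colv m (v, c2) = Pi.single i 1 := by
  funext r
  simp only [Pi.add_apply]
  by_cases hr : (r : ℕ) < m
  · rw [colv_lt m _ r hr, colv_lt m _ r hr]
    have hz : ∀ x : ZMod 2, x + x = 0 := by decide
    rw [hz, Pi.single_apply, if_neg (by intro hc; rw [hc] at hr; omega)]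
  · rw [colv_ge m _ r hr, colv_ge m _ r hr, hT, Pi.single_apply]
    simp only [Fin.val_mk]
    by_cases he : r = i
    · rw [if_pos (by rw [he]), if_pos he]
    · rw [if_neg (by intro hc; exact he (Fin.ext (by have := r.isLt; omega))), if_neg he]

lemma colv_sum_T3 (m : ℕ) (i : Fin (m + 3)) (hi : m ≤ (i : ℕ)) (v w : V m) (c1 c2 c3 : Fin 5)
    (hT : ∀ t : Fin 3, Tv c1 t + Tv c2 t + Tv c3 t = if (t : ℕ) = (i : ℕ) - m then 1 else 0) :
    colv m (v, c1) + colv m (w, c2) + colv m (v + w, c3) = Pi.single i 1 := by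
  funext r
  simp only [Pi.add_apply]
  by_cases hr : (r : ℕ) < m
  · rw [colv_lt m _ r hr, colv_lt m _ r hr, colv_lt m _ r hr]
    simp only [Pi.add_apply]
    have hz : ∀ x y : ZMod 2, x + y + (x + y) = 0 := by decide
    rw [hz, Pi.single_apply, if_neg (by intro hc; rw [hc] at hr; omega)]
  · rw [colv_ge m _ r hr, colv_ge m _ r hr, colv_ge m _ r hr, hT, Pi.single_apply]
    simp only [Fin.val_mk]
    by_cases he : r = i
    · rw [if_pos (by rw [he]), if_pos he]
    · rw [if_neg (by intro hc; exact he (Fin.ext (by have := r.isLt; omega))), if_neg he]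

lemma colv_single (m : ℕ) (i : Fin (m + 3)) (hi : m ≤ (i : ℕ)) (c : Fin 5)
    (hT : ∀ t : Fin 3, Tv c t = if (t : ℕ) = (i : ℕ) - m then 1 else 0) :
    colv m (0, c) = Pi.single i 1 := by
  funext r
  by_cases hr : (r : ℕ) < m
  · rw [colv_lt m _ r hr]
    rw [Pi.single_apply, if_neg (by intro hc; rw [hc] at hr; omega)]
    rfl
  · rw [colv_ge m _ r hr, hT, Pi.single_apply]
    simp only [Fin.val_mk]
    by_cases he : r = i
    · rw [if_pos (by rw [he]), if_pos he]
    · rw [if_neg (by intro hc; exact he (Fin.ext (by have := r.isLt; omega))), if_neg he]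


def cA (m : ℕ) (i' : Fin m) (p : V m × Fin 2) : Fin 5 :=
  ⟨1 + 2 * p.2.val + (if p.1 i' = 0 then 0 else 1), by have := p.2.isLt; split <;> omega⟩

lemma cA_val_ne (m : ℕ) (i' : Fin m) (p : V m × Fin 2) : (cA m i' p).val ≠ 0 := by
  simp only [cA]; split <;> omega

noncomputable def RA (m : ℕ) (i' : Fin m) (p : V m × Fin 2) : Finset (Fin (5 * 2 ^ m - 1)) :=
  {ι m (p.1, cA m i' p), ι m (p.1 + Pi.single i' 1, cA m i' p)}

lemma caseA_inj (m : ℕ) (i' : Fin m) {p q : V m × Fin 2} {X Y : V m}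
    (hX : X = p.1 ∨ X = p.1 + Pi.single i' 1) (hY : Y = q.1 ∨ Y = q.1 + Pi.single i' 1)
    (hfst : X = Y) (hε : (p.1 i' = 0 ↔ q.1 i' = 0)) (hb : p.2 = q.2) : p = q := by
  have hz2 : ∀ a : ZMod 2, a = 0 ∨ a = 1 := by decide
  have hadd : ∀ (x : V m), (x + Pi.single i' 1 : V m) i' = x i' + 1 := by
    intro x; simp [Pi.single_eq_same]
  have h1 : p.1 = q.1 := by
    rcases hX with rfl | rfl <;> rcases hY with rfl | rfl
    · exact hfst
    · exfalso
      have hv := congrFun hfst i'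
      rw [hadd] at hv
      rcases hz2 (p.1 i') with h | h <;> rcases hz2 (q.1 i') with h' | h'
      · rw [h, h'] at hv; revert hv; decide
      · exact absurd (hε.mp h) (by rw [h']; decide)
      · exact absurd (hε.mpr h') (by rw [h]; decide)
      · rw [h, h'] at hv; revert hv; decide
    · exfalso
      have hv := congrFun hfst i'
      rw [hadd] at hv
      rcases hz2 (p.1 i') with h | h <;> rcases hz2 (q.1 i') with h' | h'
      · rw [h, h'] at hv; revert hv; decide
      · exact absurd (hε.mp h) (by rw [h']; decide)
      · exact absurd (hε.mpr h') (by rw [h]; decide)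
      · rw [h, h'] at hv; revert hv; decide
    · exact funext fun j => add_right_cancel (congrFun hfst j)
  exact Prod.ext h1 hb

lemma cA_eq (m : ℕ) (i' : Fin m) {p q : V m × Fin 2} (h : cA m i' p = cA m i' q) :
    p.2 = q.2 ∧ (p.1 i' = 0 ↔ q.1 i' = 0) := by
  have hv := congrArg Fin.val h
  simp only [cA] at hv
  have hb2 := p.2.isLt
  have hb2' := q.2.isLt
  by_cases e1 : p.1 i' = 0 <;> by_cases e2 : q.1 i' = 0 <;>
    [rw [if_pos e1, if_pos e2] at hv; rw [if_pos e1, if_neg e2] at hv;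
     rw [if_neg e1, if_pos e2] at hv; rw [if_neg e1, if_neg e2] at hv]
  · exact ⟨Fin.ext (by omega), by tauto⟩
  · omega
  · omega
  · exact ⟨Fin.ext (by omega), by tauto⟩

lemma RA_disj (m : ℕ) (i' : Fin m) (p q : V m × Fin 2) (hpq : p ≠ q) :
    Disjoint (RA m i' p) (RA m i' q) := by
  rw [Finset.disjoint_left]
  intro a ha haq
  simp only [RA, Finset.mem_insert, Finset.mem_singleton] at ha haq
  apply hpq
  have get : ∀ {X Y : V m}, a = ι m (X, cA m i' p) → a = ι m (Y, cA m i' q) →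
      (X = p.1 ∨ X = p.1 + Pi.single i' 1) → (Y = q.1 ∨ Y = q.1 + Pi.single i' 1) → p = q := by
    intro X Y h h' hX hY
    have hXY : (X, cA m i' p) = (Y, cA m i' q) :=
      ι_inj m (enc_ne_zero_snd m (cA_val_ne m i' p)) (enc_ne_zero_snd m (cA_val_ne m i' q))
        (h ▸ h')
    have hfst : X = Y := congrArg Prod.fst hXY
    have hsnd := cA_eq m i' (congrArg Prod.snd hXY)
    exact caseA_inj m i' hX hY hfst hsnd.2 hsnd.1
  rcases ha with h | h <;> rcases haq with h' | h'
  · exact get h h' (Or.inl rfl) (Or.inl rfl)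
  · exact get h h' (Or.inl rfl) (Or.inr rfl)
  · exact get h h' (Or.inr rfl) (Or.inl rfl)
  · exact get h h' (Or.inr rfl) (Or.inr rfl)

lemma RA_sum (m : ℕ) (i : Fin (m + 3)) (him : (i : ℕ) < m) (p : V m × Fin 2) :
    (∑ h ∈ RA m ⟨i, him⟩ p, fun r : Fin (m + 3) => Gmat m r h) = Pi.single i 1 := by
  have h1 := enc_ne_zero_snd m (d := (p.1, cA m ⟨i, him⟩ p)) (cA_val_ne m ⟨i, him⟩ p)
  have h2 := enc_ne_zero_snd m
    (d := (p.1 + Pi.single ⟨i, him⟩ 1, cA m ⟨i, him⟩ p)) (cA_val_ne m ⟨i, him⟩ p)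
  have hne : ι m (p.1, cA m ⟨i, him⟩ p) ≠ ι m (p.1 + Pi.single ⟨i, him⟩ 1, cA m ⟨i, him⟩ p) := by
    intro hcontra
    have heq := ι_inj m h1 h2 hcontra
    have hf : p.1 = p.1 + Pi.single ⟨i, him⟩ 1 := congrArg Prod.fst heq
    have hv := congrFun hf ⟨i, him⟩
    rw [Pi.add_apply, Pi.single_eq_same] at hv
    have : ∀ a : ZMod 2, ¬ a = a + 1 := by decide
    exact this _ hv
  rw [RA, Finset.sum_pair hne, Gcol m _ h1, Gcol m _ h2]
  exact colv_sum_A m i him p.1 (cA m ⟨i, him⟩ p)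


noncomputable def RB (m : ℕ) (p : V m × Fin 2) : Finset (Fin (5 * 2 ^ m - 1)) :=
  {ι m (p.1, ⟨2 * p.2.val + 1, by have := p.2.isLt; omega⟩),
   ι m (p.1, ⟨2 * p.2.val + 2, by have := p.2.isLt; omega⟩)}

noncomputable def RC (m : ℕ) (p : V m × Fin 2) : Finset (Fin (5 * 2 ^ m - 1)) :=
  {ι m (p.1, ⟨p.2.val + 1, by have := p.2.isLt; omega⟩),
   ι m (p.1, ⟨p.2.val + 3, by have := p.2.isLt; omega⟩)}

lemma RB_disj (m : ℕ) (p q : V m × Fin 2) (hpq : p ≠ q) :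
    Disjoint (RB m p) (RB m q) := by
  rw [Finset.disjoint_left]
  intro a ha haq
  simp only [RB, Finset.mem_insert, Finset.mem_singleton] at ha haq
  apply hpq
  have hb2 := p.2.isLt
  have hb2' := q.2.isLt
  have get : ∀ {sp sq : Fin 5}, a = ι m (p.1, sp) → a = ι m (q.1, sq) →
      sp.val ≠ 0 → sq.val ≠ 0 → (p.1 = q.1 ∧ sp = sq) := by
    intro sp sq h h' hsp hsq
    have hXY : (p.1, sp) = (q.1, sq) :=
      ι_inj m (enc_ne_zero_snd m hsp) (enc_ne_zero_snd m hsq) (h ▸ h')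
    exact Prod.mk.inj hXY
  rcases ha with h | h <;> rcases haq with h' | h' <;>
    [ (have := get h h' (by simp only [Fin.val_mk]; omega) (by simp only [Fin.val_mk]; omega));
      (have := get h h' (by simp only [Fin.val_mk]; omega) (by simp only [Fin.val_mk]; omega));
      (have := get h h' (by simp only [Fin.val_mk]; omega) (by simp only [Fin.val_mk]; omega));
      (have := get h h' (by simp only [Fin.val_mk]; omega) (by simp only [Fin.val_mk]; omega)) ] <;>
    exact Prod.ext this.1 (Fin.ext (by have hv := congrArg Fin.val this.2; simp only [Fin.val_mk] at hv; omega))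

lemma RC_disj (m : ℕ) (p q : V m × Fin 2) (hpq : p ≠ q) :
    Disjoint (RC m p) (RC m q) := by
  rw [Finset.disjoint_left]
  intro a ha haq
  simp only [RC, Finset.mem_insert, Finset.mem_singleton] at ha haq
  apply hpq
  have hb2 := p.2.isLt
  have hb2' := q.2.isLt
  have get : ∀ {sp sq : Fin 5}, a = ι m (p.1, sp) → a = ι m (q.1, sq) →
      sp.val ≠ 0 → sq.val ≠ 0 → (p.1 = q.1 ∧ sp = sq) := by
    intro sp sq h h' hsp hsq
    have hXY : (p.1, sp) = (q.1, sq) :=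
      ι_inj m (enc_ne_zero_snd m hsp) (enc_ne_zero_snd m hsq) (h ▸ h')
    exact Prod.mk.inj hXY
  rcases ha with h | h <;> rcases haq with h' | h' <;>
    [ (have := get h h' (by simp only [Fin.val_mk]; omega) (by simp only [Fin.val_mk]; omega));
      (have := get h h' (by simp only [Fin.val_mk]; omega) (by simp only [Fin.val_mk]; omega));
      (have := get h h' (by simp only [Fin.val_mk]; omega) (by simp only [Fin.val_mk]; omega));
      (have := get h h' (by simp only [Fin.val_mk]; omega) (by simp only [Fin.val_mk]; omega)) ] <;>
    exact Prod.ext this.1 (Fin.ext (by have hv := congrArg Fin.val this.2; simp only [Fin.val_mk] at hv; omega))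

lemma hTB : ∀ (b : Fin 2) (t : Fin 3),
    Tv ⟨2 * b.val + 1, by omega⟩ t + Tv ⟨2 * b.val + 2, by omega⟩ t
      = if (t : ℕ) = 0 then 1 else 0 := by decide

lemma hTC : ∀ (b : Fin 2) (t : Fin 3),
    Tv ⟨b.val + 1, by omega⟩ t + Tv ⟨b.val + 3, by omega⟩ t
      = if (t : ℕ) = 1 then 1 else 0 := by decide

lemma RB_sum (m : ℕ) (i : Fin (m + 3)) (hi : (i : ℕ) = m) (p : V m × Fin 2) :
    (∑ h ∈ RB m p, fun r : Fin (m + 3) => Gmat m r h) = Pi.single i 1 := by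
  have hb2 := p.2.isLt
  have h1 : enc m (p.1, (⟨2 * p.2.val + 1, by omega⟩ : Fin 5)) ≠ 0 :=
    enc_ne_zero_snd m (by simp only [Fin.val_mk]; omega)
  have h2 : enc m (p.1, (⟨2 * p.2.val + 2, by omega⟩ : Fin 5)) ≠ 0 :=
    enc_ne_zero_snd m (by simp only [Fin.val_mk]; omega)
  have hne : ι m (p.1, (⟨2 * p.2.val + 1, by omega⟩ : Fin 5)) ≠
      ι m (p.1, (⟨2 * p.2.val + 2, by omega⟩ : Fin 5)) := by
    intro hcontra
    have heq := ι_inj m h1 h2 hcontra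
    have hv := congrArg Fin.val (congrArg Prod.snd heq)
    simp only [Fin.val_mk] at hv
    omega
  rw [RB, Finset.sum_pair hne, Gcol m _ h1, Gcol m _ h2]
  apply colv_sum_T2 m i (by omega) p.1
  intro t
  have hsub : (i : ℕ) - m = 0 := by omega
  rw [hsub]
  exact hTB p.2 t

lemma RC_sum (m : ℕ) (i : Fin (m + 3)) (hi : (i : ℕ) = m + 1) (p : V m × Fin 2) :
    (∑ h ∈ RC m p, fun r : Fin (m + 3) => Gmat m r h) = Pi.single i 1 := by
  have hb2 := p.2.isLt
  have h1 : enc m (p.1, (⟨p.2.val + 1, by omega⟩ : Fin 5)) ≠ 0 :=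
    enc_ne_zero_snd m (by simp only [Fin.val_mk]; omega)
  have h2 : enc m (p.1, (⟨p.2.val + 3, by omega⟩ : Fin 5)) ≠ 0 :=
    enc_ne_zero_snd m (by simp only [Fin.val_mk]; omega)
  have hne : ι m (p.1, (⟨p.2.val + 1, by omega⟩ : Fin 5)) ≠
      ι m (p.1, (⟨p.2.val + 3, by omega⟩ : Fin 5)) := by
    intro hcontra
    have heq := ι_inj m h1 h2 hcontra
    have hv := congrArg Fin.val (congrArg Prod.snd heq)
    simp only [Fin.val_mk] at hv
    omega
  rw [RC, Finset.sum_pair hne, Gcol m _ h1, Gcol m _ h2]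
  apply colv_sum_T2 m i (by omega) p.1
  intro t
  have hsub : (i : ℕ) - m = 1 := by omega
  rw [hsub]
  exact hTC p.2 t


lemma nzD (m : ℕ) (X : V m) (sv : ℕ) (h5 : sv < 5) (hs : sv ≠ 0) :
    enc m (X, (⟨sv, h5⟩ : Fin 5)) ≠ 0 :=
  enc_ne_zero_snd m (by simp only [Fin.val_mk]; omega)

lemma mismD (m : ℕ) {X Y : V m} {su sv : ℕ} {hu : su < 5} {hv : sv < 5}
    (h : (X, (⟨su, hu⟩ : Fin 5)) = (Y, ⟨sv, hv⟩)) : su = sv := by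
  have := congrArg Fin.val (Prod.mk.inj h).2
  simpa using this

noncomputable def RD (m : ℕ) (p : V m × Fin 2) : Finset (Fin (5 * 2 ^ m - 1)) :=
  if p.2 = 0 then
    (if p.1 = 0 then {ι m (p.1, ⟨1, by omega⟩)}
     else {ι m (p.1, ⟨0, by omega⟩), ι m (p.1, ⟨1, by omega⟩)})
  else {ι m (p.1, ⟨2, by omega⟩), ι m (Mlin m p.1, ⟨3, by omega⟩),
        ι m (p.1 + Mlin m p.1, ⟨4, by omega⟩)}

lemma RD_disj (m : ℕ) (hm : 2 ≤ m) (p q : V m × Fin 2) (hpq : p ≠ q) :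
    Disjoint (RD m p) (RD m q) := by
  rw [Finset.disjoint_left]
  intro a ha haq
  apply hpq
  by_cases hp : p.2 = 0 <;> by_cases hq : q.2 = 0
  · -- both pairs/singletons
    rw [RD, if_pos hp] at ha
    rw [RD, if_pos hq] at haq
    have hb : p.2 = q.2 := by rw [hp, hq]
    refine Prod.ext ?_ hb
    by_cases hp1 : p.1 = 0 <;> by_cases hq1 : q.1 = 0
    · rw [hp1, hq1]
    · rw [if_pos hp1] at ha
      rw [if_neg hq1] at haq
      simp only [Finset.mem_singleton, Finset.mem_insert] at ha haq
      rcases haq with h' | h'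
      · exact absurd (mismD m (ι_inj m (nzD m _ _ _ (by omega)) (enc_ne_zero_fst m hq1)
          (ha ▸ h'))) (by omega)
      · exact (Prod.mk.inj (ι_inj m (nzD m _ _ _ (by omega)) (nzD m _ _ _ (by omega))
          (ha ▸ h'))).1
    · rw [if_neg hp1] at ha
      rw [if_pos hq1] at haq
      simp only [Finset.mem_singleton, Finset.mem_insert] at ha haq
      rcases ha with h | h
      · exact absurd (mismD m (ι_inj m (enc_ne_zero_fst m hp1) (nzD m _ _ _ (by omega))
          (h ▸ haq))) (by omega)
      · exact (Prod.mk.inj (ι_inj m (nzD m _ _ _ (by omega)) (nzD m _ _ _ (by omega))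
          (h ▸ haq))).1
    · rw [if_neg hp1] at ha
      rw [if_neg hq1] at haq
      simp only [Finset.mem_singleton, Finset.mem_insert] at ha haq
      rcases ha with h | h <;> rcases haq with h' | h'
      · exact (Prod.mk.inj (ι_inj m (enc_ne_zero_fst m hp1) (enc_ne_zero_fst m hq1)
          (h ▸ h'))).1
      · exact absurd (mismD m (ι_inj m (enc_ne_zero_fst m hp1) (nzD m _ _ _ (by omega))
          (h ▸ h'))) (by omega)
      · exact absurd (mismD m (ι_inj m (nzD m _ _ _ (by omega)) (enc_ne_zero_fst m hq1)
          (h ▸ h'))) (by omega)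
      · exact (Prod.mk.inj (ι_inj m (nzD m _ _ _ (by omega)) (nzD m _ _ _ (by omega))
          (h ▸ h'))).1
  · -- p pair, q triple : impossible
    exfalso
    rw [RD, if_pos hp] at ha
    rw [RD, if_neg hq] at haq
    simp only [Finset.mem_singleton, Finset.mem_insert] at ha haq
    have hps : ∃ (X : V m) (sv : ℕ) (h5 : sv < 5), sv ≤ 1 ∧ enc m (X, (⟨sv, h5⟩ : Fin 5)) ≠ 0 ∧
        a = ι m (X, ⟨sv, h5⟩) := by
      by_cases hp1 : p.1 = 0
      · rw [if_pos hp1] at ha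
        simp only [Finset.mem_singleton] at ha
        exact ⟨p.1, 1, by omega, by omega, nzD m _ _ _ (by omega), ha⟩
      · rw [if_neg hp1] at ha
        simp only [Finset.mem_singleton, Finset.mem_insert] at ha
        rcases ha with h | h
        · exact ⟨p.1, 0, by omega, by omega, enc_ne_zero_fst m hp1, h⟩
        · exact ⟨p.1, 1, by omega, by omega, nzD m _ _ _ (by omega), h⟩
    obtain ⟨X, sv, h5, hle, hnz, hX⟩ := hps
    rcases haq with h' | h' | h' <;>
      exact absurd (mismD m (ι_inj m hnz (nzD m _ _ _ (by omega)) (hX ▸ h'))) (by omega)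
  · -- p triple, q pair : impossible
    exfalso
    rw [RD, if_neg hp] at ha
    rw [RD, if_pos hq] at haq
    simp only [Finset.mem_singleton, Finset.mem_insert] at ha haq
    have hps : ∃ (X : V m) (sv : ℕ) (h5 : sv < 5), sv ≤ 1 ∧ enc m (X, (⟨sv, h5⟩ : Fin 5)) ≠ 0 ∧
        a = ι m (X, ⟨sv, h5⟩) := by
      by_cases hq1 : q.1 = 0
      · rw [if_pos hq1] at haq
        simp only [Finset.mem_singleton] at haq
        exact ⟨q.1, 1, by omega, by omega, nzD m _ _ _ (by omega), haq⟩
      · rw [if_neg hq1] at haq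
        simp only [Finset.mem_singleton, Finset.mem_insert] at haq
        rcases haq with h | h
        · exact ⟨q.1, 0, by omega, by omega, enc_ne_zero_fst m hq1, h⟩
        · exact ⟨q.1, 1, by omega, by omega, nzD m _ _ _ (by omega), h⟩
    obtain ⟨X, sv, h5, hle, hnz, hX⟩ := hps
    rcases ha with h' | h' | h' <;>
      exact absurd (mismD m (ι_inj m (nzD m _ _ _ (by omega)) hnz (h' ▸ hX))) (by omega)
  · -- both triples
    rw [RD, if_neg hp] at ha
    rw [RD, if_neg hq] at haq
    simp only [Finset.mem_singleton, Finset.mem_insert] at ha haq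
    have hb : p.2 = q.2 := by
      have h1 : p.2.val ≠ 0 := fun h => hp (Fin.ext (by simpa using h))
      have h2 : q.2.val ≠ 0 := fun h => hq (Fin.ext (by simpa using h))
      have := p.2.isLt
      have := q.2.isLt
      exact Fin.ext (by omega)
    refine Prod.ext ?_ hb
    rcases ha with h | h | h <;> rcases haq with h' | h' | h' <;>
      [ exact (Prod.mk.inj (ι_inj m (nzD m _ _ _ (by omega)) (nzD m _ _ _ (by omega)) (h ▸ h'))).1;
        exact absurd (mismD m (ι_inj m (nzD m _ _ _ (by omega)) (nzD m _ _ _ (by omega)) (h ▸ h'))) (by omega);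
        exact absurd (mismD m (ι_inj m (nzD m _ _ _ (by omega)) (nzD m _ _ _ (by omega)) (h ▸ h'))) (by omega);
        exact absurd (mismD m (ι_inj m (nzD m _ _ _ (by omega)) (nzD m _ _ _ (by omega)) (h ▸ h'))) (by omega);
        exact Mlin_inj m hm (Prod.mk.inj (ι_inj m (nzD m _ _ _ (by omega)) (nzD m _ _ _ (by omega)) (h ▸ h'))).1;
        exact absurd (mismD m (ι_inj m (nzD m _ _ _ (by omega)) (nzD m _ _ _ (by omega)) (h ▸ h'))) (by omega);
        exact absurd (mismD m (ι_inj m (nzD m _ _ _ (by omega)) (nzD m _ _ _ (by omega)) (h ▸ h'))) (by omega);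
        exact absurd (mismD m (ι_inj m (nzD m _ _ _ (by omega)) (nzD m _ _ _ (by omega)) (h ▸ h'))) (by omega);
        exact Nlin_inj m hm (Prod.mk.inj (ι_inj m (nzD m _ _ _ (by omega)) (nzD m _ _ _ (by omega)) (h ▸ h'))).1 ]


lemma hTD1 : ∀ t : Fin 3, Tv ⟨1, by omega⟩ t = if (t : ℕ) = 2 then 1 else 0 := by decide
lemma hTD2 : ∀ t : Fin 3, Tv ⟨0, by omega⟩ t + Tv ⟨1, by omega⟩ t
    = if (t : ℕ) = 2 then 1 else 0 := by decide
lemma hTD3 : ∀ t : Fin 3, Tv ⟨2, by omega⟩ t + Tv ⟨3, by omega⟩ t + Tv ⟨4, by omega⟩ t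
    = if (t : ℕ) = 2 then 1 else 0 := by decide

lemma RD_sum (m : ℕ) (i : Fin (m + 3)) (hi : (i : ℕ) = m + 2) (p : V m × Fin 2) :
    (∑ h ∈ RD m p, fun r : Fin (m + 3) => Gmat m r h) = Pi.single i 1 := by
  have hsub : (i : ℕ) - m = 2 := by omega
  by_cases hp : p.2 = 0
  · by_cases hp1 : p.1 = 0
    · rw [RD, if_pos hp, if_pos hp1, Finset.sum_singleton, Gcol m _ (nzD m _ _ _ (by omega)),
        hp1]
      exact colv_single m i (by omega) _ (fun t => by rw [hsub]; exact hTD1 t)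
    · have hne : ι m (p.1, (⟨0, by omega⟩ : Fin 5)) ≠ ι m (p.1, (⟨1, by omega⟩ : Fin 5)) :=
        fun h => absurd (mismD m (ι_inj m (enc_ne_zero_fst m hp1) (nzD m _ _ _ (by omega)) h))
          (by omega)
      rw [RD, if_pos hp, if_neg hp1, Finset.sum_pair hne,
        Gcol m _ (enc_ne_zero_fst m hp1), Gcol m _ (nzD m _ _ _ (by omega))]
      exact colv_sum_T2 m i (by omega) p.1 _ _ (fun t => by rw [hsub]; exact hTD2 t)
  · have hxy : ι m (p.1, (⟨2, by omega⟩ : Fin 5)) ≠ ι m (Mlin m p.1, (⟨3, by omega⟩ : Fin 5)) :=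
      fun h => absurd (mismD m (ι_inj m (nzD m _ _ _ (by omega)) (nzD m _ _ _ (by omega)) h))
        (by omega)
    have hxz : ι m (p.1, (⟨2, by omega⟩ : Fin 5)) ≠
        ι m (p.1 + Mlin m p.1, (⟨4, by omega⟩ : Fin 5)) :=
      fun h => absurd (mismD m (ι_inj m (nzD m _ _ _ (by omega)) (nzD m _ _ _ (by omega)) h))
        (by omega)
    have hyz : ι m (Mlin m p.1, (⟨3, by omega⟩ : Fin 5)) ≠
        ι m (p.1 + Mlin m p.1, (⟨4, by omega⟩ : Fin 5)) :=
      fun h => absurd (mismD m (ι_inj m (nzD m _ _ _ (by omega)) (nzD m _ _ _ (by omega)) h))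
        (by omega)
    have hnotmem : ι m (p.1, (⟨2, by omega⟩ : Fin 5)) ∉
        ({ι m (Mlin m p.1, (⟨3, by omega⟩ : Fin 5)),
          ι m (p.1 + Mlin m p.1, (⟨4, by omega⟩ : Fin 5))} : Finset (Fin (5 * 2 ^ m - 1))) := by
      intro hmem
      rcases Finset.mem_insert.mp hmem with h | h
      · exact hxy h
      · exact hxz (Finset.mem_singleton.mp h)
    rw [RD, if_neg hp, Finset.sum_insert hnotmem, Finset.sum_pair hyz,
      Gcol m _ (nzD m _ _ _ (by omega)), Gcol m _ (nzD m _ _ _ (by omega)),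
      Gcol m _ (nzD m _ _ _ (by omega)), ← add_assoc]
    exact colv_sum_T3 m i (by omega) p.1 (Mlin m p.1) _ _ _ (fun t => by rw [hsub]; exact hTD3 t)

theorem isPIR (m : ℕ) (hm : 2 ≤ m) :
    IsPIRMatrix (m + 3) (5 * 2 ^ m - 1) (2 ^ (m + 1)) (Gmat m) := by
  classical
  have hcard : Fintype.card (V m × Fin 2) = 2 ^ (m + 1) := by
    rw [Fintype.card_prod, Fintype.card_fun, ZMod.card, Fintype.card_fin,
      Fintype.card_fin, pow_succ]
  let φ : Fin (2 ^ (m + 1)) ≃ (V m × Fin 2) := (Fintype.equivFinOfCardEq hcard).symm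
  intro i
  have generic : ∀ (R' : V m × Fin 2 → Finset (Fin (5 * 2 ^ m - 1))),
      (∀ p q : V m × Fin 2, p ≠ q → Disjoint (R' p) (R' q)) →
      (∀ p : V m × Fin 2, (∑ h ∈ R' p, fun r : Fin (m + 3) => Gmat m r h) = Pi.single i 1) →
      ∃ R : Fin (2 ^ (m + 1)) → Finset (Fin (5 * 2 ^ m - 1)),
        (∀ j j' : Fin (2 ^ (m + 1)), j ≠ j' → Disjoint (R j) (R j')) ∧
        ∀ j, (∑ h ∈ R j, fun r : Fin (m + 3) => Gmat m r h) = Pi.single i 1 := by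
    intro R' hd hs
    exact ⟨fun j => R' (φ j), fun j j' hne => hd _ _ (fun hh => hne (φ.injective hh)),
      fun j => hs _⟩
  have hlt := i.isLt
  rcases lt_or_ge (i : ℕ) m with him | hge
  · exact generic (RA m ⟨i, him⟩) (RA_disj m ⟨i, him⟩) (RA_sum m i him)
  · have hcase : (i : ℕ) = m ∨ (i : ℕ) = m + 1 ∨ (i : ℕ) = m + 2 := by omega
    rcases hcase with hi | hi | hi
    · exact generic (RB m) (RB_disj m) (RB_sum m i hi)
    · exact generic (RC m) (RC_disj m) (RC_sum m i hi)
    · exact generic (RD m) (RD_disj m hm) (RD_sum m i hi)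

end Stmt19

/-- For every `s ≥ 5` one has `P(s, 2^{s-2}) ≤ 5·2^{s-3} - 1`, witnessed by an
actual `s × (5·2^{s-3} - 1)` `2^{s-2}`-PIR generator matrix. -/
theorem stmt_19 (s : ℕ) (hs : 5 ≤ s) :
    PIRlen s (2 ^ (s - 2)) ≤ 5 * 2 ^ (s - 3) - 1 ∧
    ∃ G : Matrix (Fin s) (Fin (5 * 2 ^ (s - 3) - 1)) (ZMod 2),
      IsPIRMatrix s (5 * 2 ^ (s - 3) - 1) (2 ^ (s - 2)) G := by
  obtain ⟨m, rfl⟩ : ∃ m, s = m + 3 := ⟨s - 3, by omega⟩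
  have hm : 2 ≤ m := by omega
  have h2 : m + 3 - 2 = m + 1 := by omega
  have h3 : m + 3 - 3 = m := by omega
  rw [h2, h3]
  have key := Stmt19.isPIR m hm
  have hpos : 0 < 5 * 2 ^ m - 1 := by
    have : 1 ≤ 2 ^ m := Nat.one_le_two_pow
    omega
  constructor
  · unfold PIRlen
    refine Nat.sInf_le ?_
    rw [Set.mem_setOf_eq]
    exact ⟨hpos, Stmt19.Gmat m, key⟩
  · exact ⟨Stmt19.Gmat m, key⟩
end
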